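/- arXiv:2105.05048 — 5 statements merged into one kernel-verified Lean document; each statement's English description precedes it below -/
import Mathlib

section
/- For Re(s) > 1, the square of the Dirichlet series F(s) = \sum_{n\ge 1} 1_E(n) n^{-s}, where 1_E is the indicator of sums of two squares, equals \zeta(s) L(s,\chi_4) (1 - 2^{-s})^{-1} \prod_{p \equiv 3 (4)} (1 - p^{-2s})^{-1}, where \chi_4 is the nontrivial Dirichlet character mod 4. -/
open Complex

lemma int_sq_iff (n : ℕ) : (∃ a b : ℤ, (n : ℤ) = a ^ 2 + b ^ 2) ↔ ∃ x y : ℕ, n = x ^ 2 + y ^ 2 := by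
  constructor
  · rintro ⟨a, b, h⟩
    refine ⟨a.natAbs, b.natAbs, ?_⟩
    have h2 : (n : ℤ) = ((a.natAbs ^ 2 + b.natAbs ^ 2 : ℕ) : ℤ) := by
      push_cast [Int.natAbs_sq, sq_abs]; exact h
    exact_mod_cast h2
  · rintro ⟨x, y, h⟩
    exact ⟨x, y, by exact_mod_cast h⟩

lemma E_prime_pow {p : ℕ} (hp : p.Prime) (e : ℕ) :
    (∃ a b : ℤ, ((p ^ e : ℕ) : ℤ) = a ^ 2 + b ^ 2) ↔ (p % 4 = 3 → Even e) := by
  haveI : Fact p.Prime := ⟨hp⟩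
  rw [int_sq_iff, Nat.eq_sq_add_sq_iff]
  constructor
  · intro H h3
    rcases Nat.eq_zero_or_pos e with rfl | he
    · exact Even.zero
    have := H p (Nat.mem_primeFactors.mpr ⟨hp, dvd_pow_self p he.ne', (pow_pos hp.pos e).ne'⟩) h3
    rwa [padicValNat.prime_pow] at this
  · intro H q hq' h3
    have hq := Nat.prime_of_mem_primeFactors hq'
    haveI : Fact q.Prime := ⟨hq⟩
    rcases eq_or_ne q p with rfl | hne
    · rw [padicValNat.prime_pow]
      exact H h3
    · rw [padicValNat.eq_zero_of_not_dvd]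
      · exact Even.zero
      · intro hdvd
        exact hne ((Nat.prime_dvd_prime_iff_eq hq hp).mp (hq.dvd_of_dvd_pow hdvd))

lemma E_mul {m n : ℕ} (hm : 0 < m) (hn : 0 < n) (hco : Nat.Coprime m n) :
    (∃ a b : ℤ, ((m * n : ℕ) : ℤ) = a ^ 2 + b ^ 2) ↔
      (∃ a b : ℤ, (m : ℤ) = a ^ 2 + b ^ 2) ∧ (∃ a b : ℤ, (n : ℤ) = a ^ 2 + b ^ 2) := by
  simp only [int_sq_iff, Nat.eq_sq_add_sq_iff]
  have key : ∀ q : ℕ, q.Prime → ¬(q ∣ m ∧ q ∣ n) := by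
    intro q hq ⟨h1, h2⟩
    exact hq.one_lt.ne' (Nat.eq_one_of_dvd_coprimes hco h1 h2)
  constructor
  · intro H
    constructor <;> intro q hq' h3 <;> have hq := Nat.prime_of_mem_primeFactors hq' <;>
      haveI : Fact q.Prime := ⟨hq⟩ <;>
      have hH := H q (by rw [Nat.primeFactors_mul hm.ne' hn.ne']; simp [hq']) h3 <;> rw [padicValNat.mul hm.ne' hn.ne'] at hH
    · by_cases hd : q ∣ m
      · rwa [padicValNat.eq_zero_of_not_dvd (fun h => key q hq ⟨hd, h⟩), add_zero] at hH
      · rw [padicValNat.eq_zero_of_not_dvd hd]; exact Even.zero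
    · by_cases hd : q ∣ n
      · rwa [padicValNat.eq_zero_of_not_dvd (fun h => key q hq ⟨h, hd⟩), zero_add] at hH
      · rw [padicValNat.eq_zero_of_not_dvd hd]; exact Even.zero
  · rintro ⟨H1, H2⟩ q hq' h3
    have hq := Nat.prime_of_mem_primeFactors hq'
    haveI : Fact q.Prime := ⟨hq⟩
    rw [padicValNat.mul hm.ne' hn.ne']
    have E1 : Even (padicValNat q m) := by
      by_cases hd : q ∣ m
      · exact H1 q (Nat.mem_primeFactors.mpr ⟨hq, hd, hm.ne'⟩) h3
      · rw [padicValNat.eq_zero_of_not_dvd hd]; exact Even.zero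
    have E2 : Even (padicValNat q n) := by
      by_cases hd : q ∣ n
      · exact H2 q (Nat.mem_primeFactors.mpr ⟨hq, hd, hn.ne'⟩) h3
      · rw [padicValNat.eq_zero_of_not_dvd hd]; exact Even.zero
    exact E1.add E2

lemma geom_even {x : ℂ} (hx : ‖x‖ < 1) :
    ∑' e : ℕ, (if Even e then x ^ e else 0) = (1 - x ^ 2)⁻¹ := by
  have hsm : Summable fun e : ℕ => x ^ e := summable_geometric_of_norm_lt_one hx
  have hsm' : Summable fun e : ℕ => (-x) ^ e := by
    apply summable_geometric_of_norm_lt_one; rwa [norm_neg]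
  have h1 : (1 : ℂ) - x ≠ 0 := by
    intro h; rw [sub_eq_zero] at h; rw [← h] at hx; simp at hx
  have h2 : (1 : ℂ) + x ≠ 0 := by
    intro h
    have : x = -1 := by linear_combination h
    rw [this] at hx; simp at hx
  have h3 : (1 : ℂ) - x ^ 2 ≠ 0 := by
    intro h
    have : ((1 : ℂ) - x) * (1 + x) = 0 := by linear_combination h
    rcases mul_eq_zero.mp this with h' | h'
    exacts [h1 h', h2 h']
  have key : ∀ e : ℕ, (if Even e then x ^ e else 0) = (x ^ e + (-x) ^ e) / 2 := by
    intro e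
    rcases Nat.even_or_odd e with he | he
    · rw [if_pos he, he.neg_pow]; ring
    · rw [if_neg (Nat.not_even_iff_odd.mpr he), he.neg_pow]; ring
  rw [tsum_congr key]
  have : ∑' e : ℕ, (x ^ e + (-x) ^ e) / 2 = ((1 - x)⁻¹ + (1 + x)⁻¹) / 2 := by
    rw [tsum_div_const, Summable.tsum_add hsm hsm', tsum_geometric_of_norm_lt_one hx,
      tsum_geometric_of_norm_lt_one (by rwa [norm_neg] : ‖-x‖ < 1), sub_neg_eq_add]
  rw [this]
  field_simp
  ring

open scoped Classical in
noncomputable def fE (s : ℂ) : ℕ → ℂ := fun n =>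
  (if 0 < n ∧ ∃ a b : ℤ, (n : ℤ) = a ^ 2 + b ^ 2 then (1 : ℂ) else 0) * (n : ℂ) ^ (-s)

lemma fE_eq (s : ℂ) (n : ℕ) :
    fE s n = (open scoped Classical in
      if 0 < n ∧ ∃ a b : ℤ, (n : ℤ) = a ^ 2 + b ^ 2 then (1 : ℂ) else 0) / (n : ℂ) ^ s := by
  rw [fE, div_eq_mul_inv, cpow_neg]

lemma fE_zero (s : ℂ) : fE s 0 = 0 := by simp [fE]

lemma fE_one (s : ℂ) : fE s 1 = 1 := by
  rw [fE]
  simp only [Nat.cast_one, one_cpow, mul_one]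
  rw [if_pos ⟨one_pos, 0, 1, by norm_num⟩]

lemma fE_summable {s : ℂ} (hs : 1 < s.re) : Summable (fun n => ‖fE s n‖) := by
  apply (summable_riemannZetaSummand hs).of_nonneg_of_le (fun n => norm_nonneg _)
  intro n
  rw [fE, norm_mul]
  calc _ ≤ 1 * ‖(n : ℂ) ^ (-s)‖ := by
        apply mul_le_mul_of_nonneg_right _ (norm_nonneg _)
        split <;> simp
    _ = _ := by
        rw [one_mul]; rfl

lemma fE_mul (s : ℂ) {m n : ℕ} (hco : Nat.Coprime m n) :
    fE s (m * n) = fE s m * fE s n := by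
  rcases Nat.eq_zero_or_pos m with rfl | hm
  · simp [fE_zero, fE]
  rcases Nat.eq_zero_or_pos n with rfl | hn
  · simp [fE_zero, fE]
  have hcast : ((m * n : ℕ) : ℂ) ^ (-s) = (m : ℂ) ^ (-s) * (n : ℂ) ^ (-s) := by
    push_cast
    rw [← ofReal_natCast m, ← ofReal_natCast n]
    exact mul_cpow_ofReal_nonneg m.cast_nonneg n.cast_nonneg _
  rw [fE, fE, fE, hcast]
  rcases Classical.em ((∃ a b : ℤ, ((m * n : ℕ) : ℤ) = a ^ 2 + b ^ 2)) with hE | hE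
  · rw [if_pos ⟨Nat.mul_pos hm hn, hE⟩, if_pos ⟨hm, ((E_mul hm hn hco).mp hE).1⟩,
      if_pos ⟨hn, ((E_mul hm hn hco).mp hE).2⟩]
    ring
  · rw [if_neg (fun h => hE h.2)]
    rcases Classical.em ((∃ a b : ℤ, (m : ℤ) = a ^ 2 + b ^ 2) ∧
        (∃ a b : ℤ, (n : ℤ) = a ^ 2 + b ^ 2)) with h' | h'
    · exact absurd ((E_mul hm hn hco).mpr h') hE
    · rcases Classical.em (∃ a b : ℤ, (m : ℤ) = a ^ 2 + b ^ 2) with h1 | h1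
      · rw [if_pos ⟨hm, h1⟩, if_neg (fun h => h' ⟨h1, h.2⟩)]; ring
      · rw [if_neg (fun h => h1 h.2)]; ring

lemma norm_p_cpow_lt_one {s : ℂ} (hs : 1 < s.re) {p : ℕ} (hp : 1 < p) :
    ‖(p : ℂ) ^ (-s)‖ < 1 := by
  rw [show ((p : ℂ)) = ((p : ℝ) : ℂ) by push_cast; rfl,
    norm_cpow_eq_rpow_re_of_pos (by positivity)]
  apply Real.rpow_lt_one_of_one_lt_of_neg (by exact_mod_cast hp)
  simp only [neg_re, neg_neg, Left.neg_neg_iff]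
  linarith

lemma local_factor {s : ℂ} (hs : 1 < s.re) {p : ℕ} (hp : p.Prime) :
    ∑' e : ℕ, fE s (p ^ e) =
      if p % 4 = 3 then (1 - (p : ℂ) ^ (-2 * s))⁻¹ else (1 - (p : ℂ) ^ (-s))⁻¹ := by
  classical
  have hx : ‖(p : ℂ) ^ (-s)‖ < 1 := norm_p_cpow_lt_one hs hp.one_lt
  have hpow : ∀ e : ℕ, ((p ^ e : ℕ) : ℂ) ^ (-s) = ((p : ℂ) ^ (-s)) ^ e := fun e =>
    map_pow (riemannZetaSummandHom (ne_zero_of_one_lt_re hs)) p e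
  have hpos : ∀ e : ℕ, 0 < p ^ e := fun e => Nat.pow_pos hp.pos
  by_cases h3 : p % 4 = 3
  · rw [if_pos h3]
    have step : ∀ e : ℕ, fE s (p ^ e) = if Even e then ((p : ℂ) ^ (-s)) ^ e else 0 := by
      intro e
      rw [fE, hpow e, ite_mul, one_mul, zero_mul]
      exact if_congr (by rw [E_prime_pow hp e]; simp [hpos e, h3]) rfl rfl
    rw [tsum_congr step, geom_even hx]
    congr 1
    rw [sq, ← cpow_add _ _ (by exact_mod_cast hp.pos.ne' : (p : ℂ) ≠ 0)]
    ring_nf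
  · rw [if_neg h3]
    have step : ∀ e : ℕ, fE s (p ^ e) = ((p : ℂ) ^ (-s)) ^ e := by
      intro e
      rw [fE, hpow e, if_pos ⟨hpos e, (E_prime_pow hp e).mpr (fun h => absurd h h3)⟩, one_mul]
    rw [tsum_congr step, tsum_geometric_of_norm_lt_one hx]

noncomputable def Fp (s : ℂ) : Nat.Primes → ℂ := fun p =>
  if (p : ℕ) % 4 = 3 then (1 - ((p : ℕ) : ℂ) ^ (-2 * s))⁻¹ else (1 - ((p : ℕ) : ℂ) ^ (-s))⁻¹

lemma hasProdF {s : ℂ} (hs : 1 < s.re) : HasProd (Fp s) (∑' n, fE s n) := by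
  have H0 := EulerProduct.eulerProduct_hasProd (f := fE s) (fE_one s)
    (fun {m n} hco => fE_mul s hco) (fE_summable hs) (fE_zero s)
  have heq : (fun p : Nat.Primes => ∑' e : ℕ, fE s ((p : ℕ) ^ e)) = Fp s :=
    funext fun p => local_factor hs p.prop
  rwa [heq] at H0

noncomputable def g3 (s : ℂ) : ℕ → ℂ := fun p => (1 - (p : ℂ) ^ (-2 * s))⁻¹

def T3 : Set ℕ := {p | p.Prime ∧ p % 4 = 3}

lemma hs2 {s : ℂ} (hs : 1 < s.re) : 1 < (2 * s).re := by
  rw [show (2 * s).re = 2 * s.re by simp [Complex.mul_re]]; linarith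

lemma norm_2s_lt_one {s : ℂ} (hs : 1 < s.re) {p : ℕ} (hp : 1 < p) :
    ‖(p : ℂ) ^ (-2 * s)‖ < 1 := by
  rw [neg_mul]; exact norm_p_cpow_lt_one (hs2 hs) hp

noncomputable def a3 (s : ℂ) : Nat.Primes → ℂ := fun p =>
  if (p : ℕ) % 4 = 3 then ((p : ℕ) : ℂ) ^ (-2 * s) else 0

noncomputable def Q3 (s : ℂ) : ℂ := exp (∑' p : Nat.Primes, -Complex.log (1 - a3 s p))

lemma a3_summable {s : ℂ} (hs : 1 < s.re) : Summable (a3 s) := by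
  have h1 : Summable (fun n : ℕ => ‖(n : ℂ) ^ (-(2 * s))‖) := summable_riemannZetaSummand (hs2 hs)
  have h2 : Summable (fun p : Nat.Primes => ‖((p : ℕ) : ℂ) ^ (-(2 * s))‖) :=
    h1.subtype _
  apply Summable.of_norm_bounded h2
  intro p
  rw [a3]
  split
  · rw [neg_mul]
  · simp [norm_nonneg]

lemma one_sub_a3_ne {s : ℂ} (hs : 1 < s.re) (p : Nat.Primes) : 1 - a3 s p ≠ 0 := by
  rw [a3]
  split
  · intro h
    rw [sub_eq_zero] at h
    have := norm_2s_lt_one hs p.prop.one_lt (s := s)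
    rw [← h] at this; simp at this
  · simp

lemma hasProd_a3 {s : ℂ} (hs : 1 < s.re) :
    HasProd (fun p : Nat.Primes => (1 - a3 s p)⁻¹) (Q3 s) := by
  have hsum := ((a3_summable hs).clog_one_sub).neg
  have H := hsum.hasSum.cexp
  have heq : (cexp ∘ fun p : Nat.Primes => -Complex.log (1 - a3 s p))
      = fun p : Nat.Primes => (1 - a3 s p)⁻¹ := by
    funext p
    simp only [Function.comp_apply, exp_neg, exp_log (one_sub_a3_ne hs p)]
  rw [Q3]
  rwa [heq] at H

lemma hasProd_primes3 {s : ℂ} (hs : 1 < s.re) :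
    HasProd (fun p : Nat.Primes => if (p : ℕ) % 4 = 3 then g3 s (p : ℕ) else 1) (Q3 s) := by
  have heq : (fun p : Nat.Primes => (1 - a3 s p)⁻¹)
      = fun p : Nat.Primes => if (p : ℕ) % 4 = 3 then g3 s (p : ℕ) else 1 := by
    funext p
    by_cases h3 : (p : ℕ) % 4 = 3
    · rw [if_pos h3, a3, if_pos h3, g3]
    · rw [if_neg h3, a3, if_neg h3]
      simp
  rw [← heq]
  exact hasProd_a3 hs

lemma hasProd_indicator3 {s : ℂ} (hs : 1 < s.re) :
    HasProd (fun p : {p : ℕ // p.Prime ∧ p % 4 = 3} => g3 s (p : ℕ)) (Q3 s) := by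
  classical
  have H1 : HasProd ((T3.mulIndicator (g3 s)) ∘ ((↑) : Nat.Primes → ℕ)) (Q3 s) := by
    have heq : (fun p : Nat.Primes => (1 - a3 s p)⁻¹)
        = (T3.mulIndicator (g3 s)) ∘ ((↑) : Nat.Primes → ℕ) := by
      funext p
      by_cases h3 : (p : ℕ) % 4 = 3
      · change _ = T3.mulIndicator (g3 s) (p : ℕ)
        rw [Set.mulIndicator_of_mem (show (p : ℕ) ∈ T3 from ⟨p.prop, h3⟩) (g3 s), a3,
          if_pos h3, g3]
      · change _ = T3.mulIndicator (g3 s) (p : ℕ)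
        rw [Set.mulIndicator_of_notMem (show (p : ℕ) ∉ T3 from fun hm => h3 hm.2) (g3 s), a3,
          if_neg h3]
        simp
    rw [← heq]
    exact hasProd_a3 hs
  have H2 := (hasProd_subtype_iff_mulIndicator (s := {p : ℕ | p.Prime})).mp H1
  rw [Set.mulIndicator_mulIndicator, Set.inter_eq_self_of_subset_right
    (show T3 ⊆ {p : ℕ | p.Prime} from fun p hp => hp.1)] at H2
  exact (hasProd_subtype_iff_mulIndicator (s := T3)).mpr H2

open scoped LSeries.notation

/-- For `Re(s) > 1`, the square of the Dirichlet series of the indicator of sums of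
two squares equals `ζ(s) L(s,χ₄) (1-2^{-s})^{-1} ∏_{p ≡ 3 (4)} (1-p^{-2s})^{-1}`. -/
theorem statement0 (s : ℂ) (hs : 1 < s.re) :
    (∑' n : ℕ,
        (open scoped Classical in
          if 0 < n ∧ ∃ a b : ℤ, (n : ℤ) = a ^ 2 + b ^ 2 then (1 : ℂ) else 0) / (n : ℂ) ^ s) ^ 2
      = riemannZeta s * LSeries (fun n => ((ZMod.χ₄ (n : ZMod 4) : ℤ) : ℂ)) s *
          (1 - (2 : ℂ) ^ (-s))⁻¹ *
          ∏' p : {p : ℕ // p.Prime ∧ p % 4 = 3}, (1 - ((p : ℕ) : ℂ) ^ (-2 * s))⁻¹ := by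
  classical
  set χ : DirichletCharacter ℂ 4 := (ZMod.χ₄).ringHomComp (Int.castRingHom ℂ) with hχ
  have hLfun : (fun n : ℕ => ((ZMod.χ₄ (n : ZMod 4) : ℤ) : ℂ)) = ↗χ := by
    funext n
    rw [hχ, MulChar.ringHomComp_apply, eq_intCast]
  have hζ := riemannZeta_eulerProduct_hasProd hs
  have hL := DirichletCharacter.LSeries_eulerProduct_hasProd χ hs
  set two : Nat.Primes := ⟨2, Nat.prime_two⟩ with htwo
  have h2 : HasProd (fun p : Nat.Primes => if p = two then (1 - (2 : ℂ) ^ (-s))⁻¹ else 1)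
      ((1 - (2 : ℂ) ^ (-s))⁻¹) := hasProd_ite_eq two _
  have HR := ((hζ.mul hL).mul h2).mul (hasProd_primes3 hs)
  have HF := hasProdF hs
  have HL2 := HF.mul HF
  have key : ∀ p : Nat.Primes, Fp s p * Fp s p =
      ((1 - ((p : ℕ) : ℂ) ^ (-s))⁻¹ * (1 - χ ((p : ℕ) : ZMod 4) * ((p : ℕ) : ℂ) ^ (-s))⁻¹ *
        (if p = two then (1 - (2 : ℂ) ^ (-s))⁻¹ else 1)) *
        (if (p : ℕ) % 4 = 3 then g3 s (p : ℕ) else 1) := by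
    intro p
    rcases eq_or_ne (p : ℕ) 2 with hp2 | hp2
    · have hptwo : p = two := Subtype.ext hp2
      have h43 : ¬((p : ℕ) % 4 = 3) := by rw [hp2]; decide
      have hχ2 : χ (((p : ℕ) : ZMod 4)) = 0 := by
        rw [hp2, hχ, MulChar.ringHomComp_apply, show ZMod.χ₄ ((2 : ℕ) : ZMod 4) = 0 by decide]
        simp
      rw [Fp, if_neg h43, if_neg h43, if_pos hptwo, hχ2, hp2]
      push_cast
      ring
    · have hodd : (p : ℕ) % 2 = 1 := Nat.odd_iff.mp (p.prop.odd_of_ne_two hp2)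
      have hne2 : p ≠ two := fun h => hp2 (by rw [h])
      have h14 : (p : ℕ) % 4 = 1 ∨ (p : ℕ) % 4 = 3 := by omega
      rcases h14 with h1 | h3
      · have h43 : ¬((p : ℕ) % 4 = 3) := by omega
        have hχ1 : χ (((p : ℕ) : ZMod 4)) = 1 := by
          rw [hχ, MulChar.ringHomComp_apply, ZMod.χ₄_nat_one_mod_four h1]
          simp
        rw [Fp, if_neg h43, if_neg h43, if_neg hne2, hχ1]
        ring
      · have hχ3 : χ (((p : ℕ) : ZMod 4)) = -1 := by
          rw [hχ, MulChar.ringHomComp_apply, ZMod.χ₄_nat_three_mod_four h3]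
          simp
        have hy : ((p : ℕ) : ℂ) ^ (-2 * s) = (((p : ℕ) : ℂ) ^ (-s)) ^ 2 := by
          rw [sq, ← cpow_add _ _ (by exact_mod_cast p.prop.pos.ne' : ((p : ℕ) : ℂ) ≠ 0)]
          ring_nf
        have hfac : (1 - ((p : ℕ) : ℂ) ^ (-s)) * (1 + ((p : ℕ) : ℂ) ^ (-s))
            = 1 - ((p : ℕ) : ℂ) ^ (-2 * s) := by
          rw [hy]; ring
        rw [Fp, if_pos h3, if_pos h3, if_neg hne2, hχ3, g3]
        rw [show (1 : ℂ) - (-1) * ((p : ℕ) : ℂ) ^ (-s) = 1 + ((p : ℕ) : ℂ) ^ (-s) by ring]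
        rw [show ((1 - ((p : ℕ) : ℂ) ^ (-s))⁻¹ * (1 + ((p : ℕ) : ℂ) ^ (-s))⁻¹)
          = ((1 - ((p : ℕ) : ℂ) ^ (-s)) * (1 + ((p : ℕ) : ℂ) ^ (-s)))⁻¹ from (mul_inv _ _).symm,
          hfac]
        ring
  have hfuneq : (fun p : Nat.Primes => Fp s p * Fp s p) = fun p : Nat.Primes =>
      ((1 - ((p : ℕ) : ℂ) ^ (-s))⁻¹ * (1 - χ ((p : ℕ) : ZMod 4) * ((p : ℕ) : ℂ) ^ (-s))⁻¹ *
        (if p = two then (1 - (2 : ℂ) ^ (-s))⁻¹ else 1)) *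
        (if (p : ℕ) % 4 = 3 then g3 s (p : ℕ) else 1) := funext key
  rw [hfuneq] at HL2
  have hval : (∑' n, fE s n) * (∑' n, fE s n) =
      riemannZeta s * LSeries ↗χ s * (1 - (2 : ℂ) ^ (-s))⁻¹ * Q3 s := HL2.unique HR
  have htsum : (∑' n : ℕ,
      (open scoped Classical in
        if 0 < n ∧ ∃ a b : ℤ, (n : ℤ) = a ^ 2 + b ^ 2 then (1 : ℂ) else 0) / (n : ℂ) ^ s)
      = ∑' n, fE s n := by
    refine tsum_congr fun n => ?_
    rw [fE_eq]
  rw [htsum, sq, hval, hLfun]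
  have hQ := (hasProd_indicator3 hs).tprod_eq
  simp only [g3] at hQ
  rw [hQ]
end

section
/- For Re(s) > 1, the Dirichlet series D(s) = \sum_{h \ge 1} a(h) h^{-s}, where a is the multiplicative function with a(p^k)=1 for p \equiv 1 (4), a(2^k) = 2 - 3\cdot 2^{-k}, a(p^k) = (1-p^{-(k+1)})/(1-p^{-1}) for p \equiv 3 (4), factors as D(s) = \zeta(s)(1 - 2^{-s}) R(s) \prod_{p \equiv 3 (4)} (1 - p^{-(s+1)})^{-1}, where R(s) = 1 + 2\cdot 2^{-s}/(1 - 2^{-s}) - 3\cdot 2^{-(s+1)}/(1 - 2^{-(s+1)}). -/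
open Complex
open ArithmeticFunction
open scoped ArithmeticFunction.Moebius ArithmeticFunction.zeta

lemma aux_conv_prime_pow (A : ArithmeticFunction ℂ) {p : ℕ} (hp : p.Prime) {k : ℕ} (hk : 1 ≤ k) :
    (A * (μ : ArithmeticFunction ℂ)) (p ^ k) = A (p ^ k) - A (p ^ (k - 1)) := by
  rw [ArithmeticFunction.mul_apply,
    Nat.sum_divisorsAntidiagonal (f := fun x y => A x * (μ : ArithmeticFunction ℂ) y),
    Nat.sum_divisors_prime_pow hp]
  have key : ∀ i ∈ Finset.range (k + 1),
      A (p ^ i) * (μ : ArithmeticFunction ℂ) (p ^ k / p ^ i)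
        = (if i = k then A (p ^ k) else 0) + (if i = k - 1 then -A (p ^ (k - 1)) else 0) := by
    intro i hi
    have hik : i ≤ k := by simpa [Nat.lt_succ_iff] using hi
    rw [Nat.pow_div hik hp.pos]
    rcases eq_or_ne i k with rfl | hik'
    · rw [Nat.sub_self, pow_zero, if_pos rfl, if_neg (by omega : ¬ i = i - 1)]
      simp [intCoe_apply, moebius_apply_one]
    · rcases eq_or_ne i (k - 1) with rfl | hik''
      · have : k - (k - 1) = 1 := by omega
        rw [this, if_neg hik', if_pos rfl]
        simp [intCoe_apply, moebius_apply_prime hp]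
      · have h2 : 2 ≤ k - i := by omega
        rw [if_neg hik', if_neg hik'', intCoe_apply,
          moebius_apply_prime_pow hp (by omega : k - i ≠ 0), if_neg (by omega)]
        simp
  rw [Finset.sum_congr rfl key, Finset.sum_add_distrib, Finset.sum_ite_eq' (Finset.range (k+1)),
    Finset.sum_ite_eq' (Finset.range (k+1)), if_pos (by simp), if_pos (by simp [Nat.lt_succ_iff])]
  ring


/-- Factorization of the Dirichlet series `D(s) = ∑_{h ≥ 1} a(h) h^{-s}` for `Re(s) > 1`,
where `a` is the multiplicative function with `a(p^k) = 1` for `p ≡ 1 (4)`,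
`a(2^k) = 2 - 3·2^{-k}`, and `a(p^k) = (1-p^{-(k+1)})/(1-p^{-1})` for `p ≡ 3 (4)`. -/
theorem statement2 (a : ℕ → ℝ)
    (ha1 : a 1 = 1)
    (hmul : ∀ m n : ℕ, Nat.Coprime m n → a (m * n) = a m * a n)
    (h1 : ∀ p k : ℕ, p.Prime → p % 4 = 1 → 1 ≤ k → a (p ^ k) = 1)
    (h2 : ∀ k : ℕ, 1 ≤ k → a (2 ^ k) = 2 - 3 * (2 : ℝ) ^ (-(k : ℤ)))
    (h3 : ∀ p k : ℕ, p.Prime → p % 4 = 3 → 1 ≤ k →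
      a (p ^ k) = (1 - (p : ℝ) ^ (-((k : ℤ) + 1))) / (1 - (p : ℝ)⁻¹))
    (s : ℂ) (hs : 1 < s.re) :
    ∑' h : ℕ, (if h = 0 then 0 else (a h : ℂ)) / (h : ℂ) ^ s
      = riemannZeta s * (1 - (2 : ℂ) ^ (-s)) *
          (1 + 2 * ((2 : ℂ) ^ (-s) / (1 - (2 : ℂ) ^ (-s)))
            - 3 * ((2 : ℂ) ^ (-(s + 1)) / (1 - (2 : ℂ) ^ (-(s + 1))))) *
          ∏' p : {p : ℕ // p.Prime ∧ p % 4 = 3}, (1 - ((p : ℕ) : ℂ) ^ (-(s + 1)))⁻¹ := by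
  have hs0 : s ≠ 0 := ne_zero_of_one_lt_re hs
  set A : ArithmeticFunction ℂ := ⟨fun n => if n = 0 then 0 else (a n : ℂ), if_pos rfl⟩ with hA
  have hAapp : ∀ n, A n = if n = 0 then 0 else (a n : ℂ) := fun n => rfl
  have hAmult : A.IsMultiplicative := by
    refine ⟨by simp [hAapp, ha1], @fun m n hcop => ?_⟩
    rcases eq_or_ne m 0 with rfl | hm
    · have : n = 1 := Nat.coprime_zero_left n |>.mp hcop
      subst this; simp [hAapp, ha1]
    rcases eq_or_ne n 0 with rfl | hn
    · have : m = 1 := Nat.coprime_zero_right m |>.mp hcop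
      subst this; simp [hAapp, ha1]
    simp only [hAapp, if_neg hm, if_neg hn, if_neg (Nat.mul_ne_zero hm hn)]
    rw [hmul m n hcop]; push_cast; ring
  set B : ArithmeticFunction ℂ := A * (μ : ArithmeticFunction ℂ) with hB
  have hBmult : B.IsMultiplicative := hAmult.mul (isMultiplicative_moebius.intCast)
  have hBval : ∀ (p k : ℕ), p.Prime → 1 ≤ k →
      B (p ^ k) = ((a (p ^ k) : ℂ)) - ((a (p ^ (k - 1)) : ℂ)) := by
    intro p k hp hk
    rw [hB, aux_conv_prime_pow A hp hk, hAapp, hAapp,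
      if_neg (pow_ne_zero _ hp.pos.ne'), if_neg (pow_ne_zero _ hp.pos.ne')]
  -- values of B at prime powers
  have hB21 : B 2 = -(2 : ℂ)⁻¹ := by
    have h := hBval 2 1 Nat.prime_two le_rfl
    norm_num at h
    have key : a 2 - a 1 = -(2:ℝ)⁻¹ := by
      have h2' := h2 1 le_rfl
      rw [pow_one] at h2'
      rw [h2', ha1]
      norm_num
    rw [h, ← ofReal_sub, key]
    push_cast
    ring
  have hB2k : ∀ k : ℕ, 2 ≤ k → B (2 ^ k) = 3 * ((2 : ℂ)⁻¹) ^ k := by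
    intro k hk
    have hc : ((k - 1 : ℕ) : ℤ) = (k : ℤ) - 1 := by omega
    have key : (2 - 3 * (2:ℝ) ^ (-(k:ℤ))) - (2 - 3 * (2:ℝ) ^ (-((k-1:ℕ):ℤ)))
        = 3 * ((2:ℝ)⁻¹) ^ k := by
      rw [hc]
      have e1 : (2:ℝ) ^ (-((k:ℤ)-1)) = (2:ℝ) ^ (-(k:ℤ)) * 2 := by
        rw [show -((k:ℤ)-1) = -(k:ℤ)+1 by ring, zpow_add₀ (by norm_num : (2:ℝ) ≠ 0), zpow_one]
      rw [e1, show ((2:ℝ)⁻¹) ^ k = (2:ℝ) ^ (-(k:ℤ)) by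
        rw [← zpow_natCast ((2:ℝ)⁻¹), inv_zpow, ← zpow_neg]]
      ring
    rw [hBval 2 k Nat.prime_two (by omega), h2 k (by omega), h2 (k - 1) (by omega),
      ← ofReal_sub, key]
    push_cast
    ring
  have hBp1 : ∀ (p k : ℕ), p.Prime → p % 4 = 1 → 1 ≤ k → B (p ^ k) = 0 := by
    intro p k hp hp1 hk
    have ha' : ∀ j : ℕ, a (p ^ j) = 1 := by
      intro j
      rcases Nat.eq_zero_or_pos j with rfl | hj
      · simpa using ha1
      · exact h1 p j hp hp1 hj
    rw [hBval p k hp hk, ha', ha']; simp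
  have hBp3 : ∀ (p : ℕ), p.Prime → p % 4 = 3 → ∀ k : ℕ, B (p ^ k) = ((p : ℂ)⁻¹) ^ k := by
    intro p hp hp3 k
    have hp2 : 2 ≤ p := hp.two_le
    have hpne : (1 : ℝ) - (p : ℝ)⁻¹ ≠ 0 := by
      have : (p : ℝ)⁻¹ < 1 := by
        rw [inv_lt_one_iff₀]; right; exact_mod_cast by omega
      intro h; nlinarith
    have ha' : ∀ j : ℕ, a (p ^ j) = (1 - (p : ℝ) ^ (-((j : ℤ) + 1))) / (1 - (p : ℝ)⁻¹) := by
      intro j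
      rcases Nat.eq_zero_or_pos j with rfl | hj
      · simp only [pow_zero, ha1, Nat.cast_zero, neg_add, neg_zero, zero_add]
        rw [zpow_neg, zpow_one, eq_comm, div_eq_one_iff_eq hpne]
      · exact h3 p j hp hp3 hj
    rcases Nat.eq_zero_or_pos k with rfl | hk
    · simpa using hBmult.1
    have hc : ((k - 1 : ℕ) : ℤ) = (k : ℤ) - 1 := by omega
    have hpR : (p : ℝ) ≠ 0 := by positivity
    have key : (1 - (p:ℝ) ^ (-((k:ℤ) + 1))) / (1 - (p:ℝ)⁻¹)
        - (1 - (p:ℝ) ^ (-(((k-1:ℕ):ℤ) + 1))) / (1 - (p:ℝ)⁻¹) = ((p:ℝ)⁻¹) ^ k := by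
      rw [hc, div_sub_div_same]
      have hnum : (1 - (p : ℝ) ^ (-((k : ℤ) + 1))) - (1 - (p : ℝ) ^ (-(((k:ℤ) - 1) + 1)))
          = ((p : ℝ)⁻¹) ^ k * (1 - (p : ℝ)⁻¹) := by
        have e1 : (-(((k : ℤ)) - 1 + 1)) = -(k : ℤ) := by ring
        have e2 : (-((k : ℤ) + 1)) = -(k : ℤ) + (-1) := by ring
        rw [e1, e2, zpow_add₀ hpR, zpow_neg_one,
          show (p : ℝ) ^ (-(k : ℤ)) = ((p:ℝ)⁻¹) ^ k by
            rw [← zpow_natCast ((p:ℝ)⁻¹), inv_zpow, ← zpow_neg]]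
        ring
      rw [hnum, mul_div_assoc, div_self hpne, mul_one]
    rw [hBval p k hp hk, ha', ha', ← ofReal_sub, key]
    push_cast
    ring
  -- norm bound for B
  have hBnorm : ∀ n : ℕ, ‖B n‖ ≤ (if 2 ∣ n then 3 else 1) * ((n : ℝ))⁻¹ := by
    intro n
    induction n using Nat.recOnPosPrimePosCoprime with
    | prime_pow p k hpp hk =>
      have hp : p.Prime := hpp
      rcases eq_or_ne p 2 with rfl | hodd
      · rw [if_pos (dvd_pow_self 2 hk.ne')]
        rcases eq_or_ne k 1 with rfl | hk1
        · rw [pow_one, hB21]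
          rw [norm_neg, norm_inv]
          simp only [Complex.norm_ofNat]
          norm_num
        · have hk2 : 2 ≤ k := by omega
          rw [hB2k k hk2, norm_mul, norm_pow, norm_inv]
          simp only [Complex.norm_ofNat]
          rw [inv_pow]
          push_cast
          norm_num
      · have hpodd : p % 2 = 1 := Nat.odd_iff.mp (hp.odd_of_ne_two hodd)
        have h14 : p % 4 = 1 ∨ p % 4 = 3 := by omega
        have hnd : ¬ (2 ∣ p ^ k) := by
          intro hdvd
          have := (Nat.prime_two.dvd_of_dvd_pow hdvd)
          omega
        rw [if_neg hnd, one_mul]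
        rcases h14 with hmod | hmod
        · rw [hBp1 p k hp hmod hk]
          simp only [norm_zero]
          positivity
        · rw [hBp3 p hp hmod k, norm_pow, norm_inv]
          rw [Complex.norm_natCast, inv_pow]
          push_cast
          exact le_rfl
    | zero => simp
    | one =>
      rw [hBmult.1, if_neg (by norm_num)]
      norm_num
    | coprime a b ha hb hab iha ihb =>
      rw [hBmult.2 hab, norm_mul]
      have h2ab : (if 2 ∣ a * b then (3:ℝ) else 1) = (if 2 ∣ a then 3 else 1) * (if 2 ∣ b then 3 else 1) := by
        rcases Nat.even_or_odd a with h2a | h2a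
        · have hb2 : ¬ (2 ∣ b) := by
            intro h2b
            have : (2:ℕ) ∣ Nat.gcd a b := Nat.dvd_gcd h2a.two_dvd h2b
            rw [hab] at this
            omega
          rw [if_pos (Dvd.dvd.mul_right h2a.two_dvd b), if_pos h2a.two_dvd, if_neg hb2]
          ring
        · rcases Nat.even_or_odd b with h2b | h2b
          · rw [if_pos (Dvd.dvd.mul_left h2b.two_dvd a), if_neg (by simpa using h2a.not_two_dvd_nat),
              if_pos h2b.two_dvd]
            ring
          · rw [if_neg, if_neg (by simpa using h2a.not_two_dvd_nat), if_neg (by simpa using h2b.not_two_dvd_nat)]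
            · ring
            · intro hd
              rcases (Nat.prime_two.dvd_mul).mp hd with h | h
              · exact absurd h (by simpa using h2a.not_two_dvd_nat)
              · exact absurd h (by simpa using h2b.not_two_dvd_nat)
      rw [h2ab]
      push_cast
      rw [mul_inv]
      calc ‖B a‖ * ‖B b‖ ≤ ((if 2 ∣ a then (3:ℝ) else 1) * (a:ℝ)⁻¹) * ((if 2 ∣ b then (3:ℝ) else 1) * (b:ℝ)⁻¹) :=
            mul_le_mul iha ihb (norm_nonneg _) (by positivity)
        _ = (if 2 ∣ a then (3:ℝ) else 1) * (if 2 ∣ b then (3:ℝ) else 1) * ((a:ℝ)⁻¹ * (b:ℝ)⁻¹) := by ring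
  -- the summand function
  set z := riemannZetaSummandHom hs0 with hzdef
  have hzval : ∀ n : ℕ, z n = (n : ℂ) ^ (-s) := fun n => rfl
  have hterm : ∀ n : ℕ, LSeries.term (fun m => B m) s n = B n * z n := by
    intro n
    rw [LSeries.term_of_ne_zero' hs0, hzval, cpow_neg, div_eq_mul_inv]
  have hB3 : ∀ n : ℕ, ‖B n‖ ≤ 3 := by
    intro n
    rcases eq_or_ne n 0 with rfl | hn
    · rw [ArithmeticFunction.map_zero, norm_zero]; norm_num
    · have h1n : (1:ℝ) ≤ (n:ℝ) := by exact_mod_cast Nat.one_le_iff_ne_zero.mpr hn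
      calc ‖B n‖ ≤ (if 2 ∣ n then 3 else 1) * ((n:ℝ))⁻¹ := hBnorm n
        _ ≤ 3 * 1 := by
            refine mul_le_mul ?_ (inv_le_one_of_one_le₀ h1n) (by positivity) (by norm_num)
            split <;> norm_num
        _ = 3 := mul_one 3
  have hsum : Summable (fun n => ‖LSeries.term (fun m => B m) s n‖) := by
    refine Summable.of_nonneg_of_le (fun n => norm_nonneg _) (fun n => ?_)
      ((summable_riemannZetaSummand hs).mul_left 3)
    rw [hterm n, norm_mul]
    exact mul_le_mul_of_nonneg_right (hB3 n) (norm_nonneg _)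
  have hf1 : LSeries.term (fun m => B m) s 1 = 1 := by
    rw [hterm, hBmult.1, hzval]
    simp
  have hfmul : ∀ {m n : ℕ}, Nat.Coprime m n → LSeries.term (fun m => B m) s (m * n)
      = LSeries.term (fun m => B m) s m * LSeries.term (fun m => B m) s n := by
    intro m n hcop
    rw [hterm, hterm, hterm, hBmult.2 hcop, map_mul z]
    ring
  have hf0 : LSeries.term (fun m => B m) s 0 = 0 := LSeries.term_zero _ _
  have euler := EulerProduct.eulerProduct_hasProd hf1 hfmul hsum hf0
  -- local factors
  have hnormlt : ∀ p : ℕ, p.Prime → ‖((p:ℕ):ℂ) ^ (-(s+1))‖ < 1 := by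
    intro p hp
    rw [norm_natCast_cpow_of_pos hp.pos]
    refine Real.rpow_lt_one_of_one_lt_of_neg (by exact_mod_cast hp.one_lt) ?_
    simp only [neg_re, add_re, one_re]
    linarith
  have hploc : ∀ p : ℕ, p.Prime → ((p:ℕ):ℂ)⁻¹ * z p = ((p:ℕ):ℂ) ^ (-(s+1)) := by
    intro p hp
    have hpne : ((p:ℕ):ℂ) ≠ 0 := Nat.cast_ne_zero.mpr hp.pos.ne'
    rw [hzval, show -(s+1) = -1 + -s by ring, cpow_add _ _ hpne, cpow_neg_one]
  have hterm_pow : ∀ (p : ℕ), p.Prime → p % 4 = 3 → ∀ e : ℕ,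
      LSeries.term (fun m => B m) s (p ^ e) = (((p:ℕ):ℂ) ^ (-(s+1))) ^ e := by
    intro p hp hp3 e
    rw [hterm, hBp3 p hp hp3 e, map_pow, ← mul_pow, hploc p hp]
  have hloc3 : ∀ p : ℕ, p.Prime → p % 4 = 3 →
      ∑' e : ℕ, LSeries.term (fun m => B m) s (p ^ e) = (1 - ((p:ℕ):ℂ) ^ (-(s+1)))⁻¹ := by
    intro p hp hp3
    rw [tsum_congr (hterm_pow p hp hp3)]
    exact tsum_geometric_of_norm_lt_one (hnormlt p hp)
  have hloc1 : ∀ p : ℕ, p.Prime → p % 4 = 1 →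
      ∑' e : ℕ, LSeries.term (fun m => B m) s (p ^ e) = 1 := by
    intro p hp hp1
    rw [tsum_eq_single 0 ?_]
    · rw [pow_zero, hf1]
    · intro e he
      rw [hterm, hBp1 p e hp hp1 (Nat.one_le_iff_ne_zero.mpr he), zero_mul]
  -- the factor at 2
  set x : ℂ := (2:ℂ) ^ (-s) with hxdef
  set y : ℂ := (2:ℂ) ^ (-(s+1)) with hydef
  have hz2 : z 2 = x := by rw [hzval, hxdef]; norm_num
  have hyx : y = 2⁻¹ * x := by
    rw [hydef, hxdef, show -(s+1) = -1 + -s by ring, cpow_add _ _ two_ne_zero, cpow_neg_one]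
  have hylt : ‖y‖ < 1 := by
    have := hnormlt 2 Nat.prime_two
    rw [show (((2:ℕ)):ℂ) = (2:ℂ) by norm_num] at this
    exact this
  have hxlt : ‖x‖ < 1 := by
    rw [hxdef, show ((2:ℂ)) = ((2:ℕ):ℂ) by norm_num, norm_natCast_cpow_of_pos (by norm_num)]
    refine Real.rpow_lt_one_of_one_lt_of_neg (by norm_num) ?_
    simp only [neg_re]; linarith
  have hterm2 : ∀ e : ℕ, 2 ≤ e → LSeries.term (fun m => B m) s (2 ^ e) = 3 * y ^ e := by
    intro e he
    rw [hterm, hB2k e he, map_pow, hz2, mul_assoc, ← mul_pow, ← hyx]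
  have hsummable2 : Summable (fun e : ℕ => LSeries.term (fun m => B m) s (2 ^ e)) :=
    (hsum.of_norm).comp_injective (Nat.pow_right_injective le_rfl)
  have hL2 : ∑' e : ℕ, LSeries.term (fun m => B m) s (2 ^ e)
      = 1 - y + 3 * y ^ 2 * (1 - y)⁻¹ := by
    rw [Summable.tsum_eq_zero_add hsummable2,
      Summable.tsum_eq_zero_add ((summable_nat_add_iff 1).mpr hsummable2)]
    have e0 : LSeries.term (fun m => B m) s (2 ^ 0) = 1 := by rw [pow_zero, hf1]
    have e1 : LSeries.term (fun m => B m) s (2 ^ (0 + 1)) = -y := by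
      rw [zero_add, pow_one, hterm, hB21, hz2, hyx]
      ring
    have etail : ∀ n : ℕ, LSeries.term (fun m => B m) s (2 ^ (n + 1 + 1))
        = (3 * y ^ 2) * y ^ n := by
      intro n
      rw [hterm2 (n + 1 + 1) (by omega), pow_add]
      ring
    rw [e0, e1, tsum_congr etail, tsum_mul_left,
      tsum_geometric_of_norm_lt_one hylt]
    ring
  -- LHS is the L-series of A
  have hLHS : (∑' h : ℕ, (if h = 0 then 0 else (a h : ℂ)) / (h : ℂ) ^ s)
      = LSeries (fun n => (A n : ℂ)) s := by
    refine tsum_congr fun h => ?_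
    rcases eq_or_ne h 0 with rfl | hh
    · rw [if_pos rfl, LSeries.term_zero, zero_div]
    · rw [LSeries.term_of_ne_zero hh, hAapp h, if_neg hh]
  -- A = ζ * B
  have hAfact : A = (ζ : ArithmeticFunction ℂ) * B := by
    rw [hB, show (ζ : ArithmeticFunction ℂ) * (A * (μ : ArithmeticFunction ℂ))
      = A * ((ζ : ArithmeticFunction ℂ) * (μ : ArithmeticFunction ℂ)) by ring,
      coe_zeta_mul_coe_moebius, mul_one]
  have hζsum : LSeriesSummable (fun n => (((ζ : ArithmeticFunction ℂ)) n : ℂ)) s := by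
    have hcongr : (fun n => (((ζ : ArithmeticFunction ℂ)) n : ℂ))
        = (fun n => ((ArithmeticFunction.zeta n : ℕ) : ℂ)) := funext fun n => natCoe_apply
    rw [hcongr]
    exact LSeriesSummable_zeta_iff.mpr hs
  have hBsum : LSeriesSummable (fun n => (B n : ℂ)) s := hsum.of_norm
  have hmain : LSeries (fun n => (A n : ℂ)) s
      = riemannZeta s * LSeries (fun n => (B n : ℂ)) s := by
    rw [hAfact, LSeries_mul' hζsum hBsum]
    congr 1
    have hcongr : (fun n => (((ζ : ArithmeticFunction ℂ)) n : ℂ))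
        = (fun n => ((ArithmeticFunction.zeta n : ℕ) : ℂ)) := funext fun n => natCoe_apply
    rw [hcongr]
    exact LSeries_zeta_eq_riemannZeta hs
  have hLB : LSeries (fun n => (B n : ℂ)) s
      = ∏' p : Nat.Primes, ∑' e : ℕ, LSeries.term (fun m => B m) s ((p : ℕ) ^ e) :=
    euler.tprod_eq.symm
  classical
  set P : Nat.Primes → ℂ := fun p => ∑' e : ℕ, LSeries.term (fun m => B m) s ((p : ℕ) ^ e)
    with hPdef
  have hmulP : Multipliable P := euler.multipliable
  set t2 : Nat.Primes := ⟨2, Nat.prime_two⟩ with ht2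
  have hPt2 : P t2 = 1 - y + 3 * y ^ 2 * (1 - y)⁻¹ := hL2
  have hsub : (∏' p : Nat.Primes, if p = t2 then 1 else P p)
      = ∏' p : {p : ℕ // p.Prime ∧ p % 4 = 3}, (1 - ((p : ℕ) : ℂ) ^ (-(s+1)))⁻¹ := by
    set i : {p : ℕ // p.Prime ∧ p % 4 = 3} → Nat.Primes := fun q => ⟨q.1, q.2.1⟩ with hidef
    have hinj : Function.Injective i := by
      intro q1 q2 h
      have hval : (i q1).val = (i q2).val := congrArg Subtype.val h
      exact Subtype.ext hval
    have hvanish : ∀ p : Nat.Primes, p ∉ Set.range i → (if p = t2 then 1 else P p) = 1 := by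
      intro p hpr
      rcases eq_or_ne p t2 with rfl | hne
      · rw [if_pos rfl]
      · rw [if_neg hne]
        have hp : (p : ℕ).Prime := p.2
        have hpne2 : (p : ℕ) ≠ 2 := fun h => hne (Subtype.ext h)
        have hodd : (p : ℕ) % 2 = 1 := Nat.odd_iff.mp (hp.odd_of_ne_two hpne2)
        have hm : (p : ℕ) % 4 = 1 ∨ (p : ℕ) % 4 = 3 := by omega
        rcases hm with hm | hm
        · exact hloc1 _ hp hm
        · exact absurd ⟨⟨p.1, hp, hm⟩, rfl⟩ hpr
    rw [← Function.Injective.tprod_eq hinj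
      (Function.mulSupport_subset_iff'.mpr hvanish)]
    refine tprod_congr fun q => ?_
    have hne : i q ≠ t2 := by
      intro h
      have h2 : q.1 = 2 := congrArg Subtype.val h
      have h3 := q.2.2
      omega
    rw [if_neg hne]
    exact hloc3 q.1 q.2.1 q.2.2
  have hx1 : (1 : ℂ) - x ≠ 0 := by
    intro h
    have : x = 1 := by linear_combination -h
    rw [this] at hxlt
    simp at hxlt
  have hy1 : (1 : ℂ) - y ≠ 0 := by
    intro h
    have : y = 1 := by linear_combination -h
    rw [this] at hylt
    simp at hylt
  have hkey : 1 - y + 3 * y ^ 2 * (1 - y)⁻¹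
      = (1 - x) * (1 + 2 * (x / (1 - x)) - 3 * (y / (1 - y))) := by
    have hxy : x = 2 * y := by rw [hyx]; ring
    rw [hxy] at hx1 ⊢
    field_simp
    linear_combination (-4 * y * (1 - y)) * mul_inv_cancel₀ hx1
  -- multipliability of the product with the factor at 2 removed
  set f' : ℕ → ℂ := fun n => if 2 ∣ n then 0 else LSeries.term (fun m => B m) s n with hf'def
  have hf'1 : f' 1 = 1 := by
    rw [hf'def]
    simp only []
    rw [if_neg (by norm_num), hf1]
  have hf'0 : f' 0 = 0 := by
    rw [hf'def]
    simp only []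
    rw [if_pos (dvd_zero 2)]
  have hf'mul : ∀ {m n : ℕ}, Nat.Coprime m n → f' (m * n) = f' m * f' n := by
    intro m n hcop
    rw [hf'def]
    simp only []
    by_cases hm : 2 ∣ m
    · rw [if_pos (hm.mul_right n), if_pos hm, zero_mul]
    · by_cases hn : 2 ∣ n
      · rw [if_pos (hn.mul_left m), if_neg hm, if_pos hn, mul_zero]
      · rw [if_neg hm, if_neg hn, if_neg (fun hd => by
          rcases (Nat.prime_two.dvd_mul).mp hd with h | h
          exacts [hm h, hn h]), hfmul hcop]
  have hsum' : Summable (fun n => ‖f' n‖) := by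
    refine Summable.of_nonneg_of_le (fun n => norm_nonneg _) (fun n => ?_) hsum
    rw [hf'def]
    simp only []
    split
    · simp [norm_nonneg]
    · exact le_rfl
  have euler' := EulerProduct.eulerProduct_hasProd hf'1 hf'mul hsum' hf'0
  have hQ : (fun p : Nat.Primes => ∑' e : ℕ, f' ((p : ℕ) ^ e))
      = fun p : Nat.Primes => if p = t2 then 1 else P p := by
    funext p
    rcases eq_or_ne p t2 with rfl | hne
    · rw [if_pos rfl]
      rw [tsum_eq_single 0 ?_]
      · rw [pow_zero, hf'1]
      · intro e he
        rw [hf'def]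
        simp only []
        rw [if_pos (dvd_pow_self 2 he)]
    · rw [if_neg hne]
      refine tsum_congr fun e => ?_
      have hpne2 : (p : ℕ) ≠ 2 := fun h => hne (Subtype.ext h)
      have hodd : ¬ (2 ∣ (p : ℕ) ^ e) := by
        intro hd
        have hdp := Nat.prime_two.dvd_of_dvd_pow hd
        exact hpne2 ((Nat.prime_dvd_prime_iff_eq Nat.prime_two p.2).mp hdp).symm
      rw [hf'def]
      simp only []
      rw [if_neg hodd]
  have hupd : Multipliable (Function.update P t2 1) := by
    refine Multipliable.congr (f := fun p : Nat.Primes => if p = t2 then 1 else P p) ?_ ?_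
    · rw [← hQ]
      exact euler'.multipliable
    · intro p
      rw [Function.update_apply]
  rw [hLHS]
  rw [hmain]
  rw [hLB]
  rw [Multipliable.tprod_eq_mul_tprod_ite' t2 hupd]
  rw [hsub]
  rw [hPt2]
  rw [hkey]
  ring
end

section
/- Let k \ge 2, let q_1,...,q_k be positive integers and G_1,...,G_k be 1-periodic complex-valued functions. Then |\sum_{(a_1,...,a_k): 1 \le a_i \le q_i, \gcd(a_i,q_i)=1, \sum_i a_i/q_i \in \mathbb{Z}} \prod_{i=1}^k G_i(a_i/q_i)| \le (1/\mathrm{lcm}(q_1,...,q_k)) \prod_{i=1}^k (q_i \sum_{1 \le a_i \le q_i, \gcd(a_i,q_i)=1} |G_i(a_i/q_i)|^2)^{1/2}. -/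
open Finset
namespace MV7

lemma per_int {α : Type*} {G : ℝ → α} (hG : ∀ x, G (x + 1) = G x) (n : ℤ) (x : ℝ) : G (x + n) = G x := by
  induction n using Int.induction_on with
  | zero => simp
  | succ n ih =>
      have : (x + ((n : ℤ) + 1 : ℤ) : ℝ) = (x + (n : ℤ)) + 1 := by push_cast; ring
      rw [this, hG, ih]
  | pred n ih =>
      have h1 : (x + (-(n : ℤ) - 1 : ℤ) : ℝ) + 1 = x + (-(n : ℤ) : ℤ) := by push_cast; ring
      rw [← ih, ← h1, hG]

lemma eq_of_modeq_Icc {q a b : ℕ} (ha : a ∈ Finset.Icc 1 q) (hb : b ∈ Finset.Icc 1 q)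
    (h : (q : ℤ) ∣ (a : ℤ) - b) : a = b := by
  simp only [Finset.mem_Icc] at ha hb
  have : (a : ℤ) - b = 0 := Int.eq_zero_of_abs_lt_dvd h (by rw [abs_lt]; omega)
  omega

def rep (x q : ℕ) : ℕ := if x % q = 0 then q else x % q

lemma rep_modeq (x q : ℕ) : rep x q ≡ x [MOD q] := by
  unfold rep Nat.ModEq
  by_cases h : x % q = 0
  · simp [Nat.mod_self, h]
  · simp only [h, if_false]
    exact Nat.mod_mod_of_dvd x dvd_rfl

lemma rep_mem {q : ℕ} (hq : 0 < q) (x : ℕ) : rep x q ∈ Finset.Icc 1 q := by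
  unfold rep
  by_cases h : x % q = 0
  · simp only [h, if_true, Finset.mem_Icc]; omega
  · simp only [h, if_false, Finset.mem_Icc]
    exact ⟨Nat.pos_of_ne_zero h, (Nat.mod_lt x hq).le⟩

lemma rep_eq {q a x : ℕ} (hq : 0 < q) (ha : a ∈ Finset.Icc 1 q) (h : x ≡ a [MOD q]) :
    rep x q = a := by
  refine eq_of_modeq_Icc (rep_mem hq x) ha ?_
  have h2 : rep x q ≡ a [MOD q] := (rep_modeq x q).trans h
  have h3 := h2.dvd
  rw [show ((rep x q : ℤ) - a) = -((a : ℤ) - rep x q) by ring]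
  exact dvd_neg.mpr h3

lemma coprime_of_modEq {x y n : ℕ} (h : x ≡ y [MOD n]) (hy : y.Coprime n) : x.Coprime n := by
  have : Nat.gcd n x = Nat.gcd n y := by
    rw [Nat.gcd_rec n x, Nat.gcd_rec n y, h]
  unfold Nat.Coprime at *
  rw [Nat.gcd_comm] at hy ⊢
  omega

lemma int_split {x y : ℚ} {D1 D2 : ℕ} (hco : Nat.Coprime D1 D2)
    (h1 : ∃ z : ℤ, x * D1 = z) (h2 : ∃ z : ℤ, y * D2 = z) (hs : ∃ n : ℤ, x + y = n) :
    (∃ n : ℤ, x = n) ∧ (∃ n : ℤ, y = n) := by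
  obtain ⟨z1, hz1⟩ := h1; obtain ⟨z2, hz2⟩ := h2; obtain ⟨n, hn⟩ := hs
  have hb := Nat.gcd_eq_gcd_ab D1 D2
  rw [hco] at hb
  set u := Nat.gcdA D1 D2 with hu
  set v := Nat.gcdB D1 D2 with hv
  have hb' : ((1 : ℤ) : ℚ) = (D1 : ℚ) * (u : ℚ) + (D2 : ℚ) * (v : ℚ) := by
    exact_mod_cast congrArg (fun z : ℤ => (z : ℚ)) hb
  have hx : x = ((z1 * u + (n * D2 - z2) * v : ℤ) : ℚ) := by
    push_cast
    have e1 : x * D2 = (n : ℚ) * D2 - z2 := by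
      rw [← hz2]; rw [show (y : ℚ) = n - x by linarith]; ring
    calc x = x * 1 := by ring
      _ = x * ((D1 : ℚ) * u + (D2 : ℚ) * v) := by rw [← hb']; norm_num
      _ = (x * D1) * u + (x * D2) * v := by ring
      _ = (z1 : ℚ) * u + ((n : ℚ) * D2 - z2) * v := by rw [hz1, e1]
  refine ⟨⟨_, hx⟩, ⟨n - (z1 * u + (n * D2 - z2) * v), ?_⟩⟩
  push_cast
  push_cast at hx
  linarith

lemma prod_sqrt {ι : Type*} (s : Finset ι) (f : ι → ℝ) (h : ∀ i ∈ s, 0 ≤ f i) :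
    ∏ i ∈ s, Real.sqrt (f i) = Real.sqrt (∏ i ∈ s, f i) := by
  induction s using Finset.cons_induction with
  | empty => simp
  | cons a s ha ih =>
      rw [Finset.prod_cons, Finset.prod_cons,
        ih (fun i hi => h i (Finset.mem_cons_of_mem hi)),
        ← Real.sqrt_mul (h a (Finset.mem_cons_self a s))]

lemma sum_mul_le_sqrt_mul_sqrt {α : Type*} (s : Finset α) (u v : α → ℝ)
    (hu : ∀ a ∈ s, 0 ≤ u a) (hv : ∀ a ∈ s, 0 ≤ v a) :
    ∑ a ∈ s, u a * v a ≤ Real.sqrt (∑ a ∈ s, u a ^ 2) * Real.sqrt (∑ a ∈ s, v a ^ 2) := by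
  have h := Finset.sum_mul_sq_le_sq_mul_sq s u v
  have h0 : 0 ≤ ∑ a ∈ s, u a * v a :=
    Finset.sum_nonneg fun a ha => mul_nonneg (hu a ha) (hv a ha)
  calc ∑ a ∈ s, u a * v a = Real.sqrt ((∑ a ∈ s, u a * v a) ^ 2) := (Real.sqrt_sq h0).symm
    _ ≤ Real.sqrt ((∑ a ∈ s, u a ^ 2) * ∑ a ∈ s, v a ^ 2) := Real.sqrt_le_sqrt h
    _ = _ := Real.sqrt_mul (Finset.sum_nonneg fun a _ => sq_nonneg _) _


open scoped Classical in
noncomputable def Sset (k : ℕ) (q : Fin k → ℕ) : Finset ((i : Fin k) → ℕ) :=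
  (Fintype.piFinset fun i => Finset.Icc 1 (q i)).filter
    (fun a : (i : Fin k) → ℕ =>
      (∀ i, Nat.Coprime (a i) (q i)) ∧ ∃ m : ℤ, (∑ i, (a i : ℚ) / (q i : ℚ)) = (m : ℚ))

def CI (q : ℕ) : Finset ℕ := (Finset.Icc 1 q).filter (fun b => Nat.Coprime b q)

open scoped Classical in
lemma mem_Sset {k : ℕ} {q : Fin k → ℕ} {a : (i : Fin k) → ℕ} :
    a ∈ Sset k q ↔ (∀ i, a i ∈ Finset.Icc 1 (q i)) ∧ (∀ i, Nat.Coprime (a i) (q i)) ∧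
      ∃ m : ℤ, (∑ i, (a i : ℚ) / (q i : ℚ)) = (m : ℚ) := by
  unfold Sset
  rw [Finset.mem_filter, Fintype.mem_piFinset]

lemma coord_determined {k : ℕ} {q : Fin k → ℕ} (j : Fin k) {a a' : (i : Fin k) → ℕ}
    (ha : a ∈ Sset k q) (ha' : a' ∈ Sset k q) (h : ∀ i, i ≠ j → a i = a' i) : a = a' := by
  rw [mem_Sset] at ha ha'
  obtain ⟨hmem, -, m, hm⟩ := ha
  obtain ⟨hmem', -, m', hm'⟩ := ha'
  have hqj : 0 < q j := by
    have := hmem j; rw [Finset.mem_Icc] at this; omega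
  have hdiff : (a j : ℚ) / (q j : ℚ) - (a' j : ℚ) / (q j : ℚ) = ((m - m' : ℤ) : ℚ) := by
    have hsub : (∑ i, (a i : ℚ) / (q i : ℚ)) - (∑ i, (a' i : ℚ) / (q i : ℚ))
        = (a j : ℚ) / (q j : ℚ) - (a' j : ℚ) / (q j : ℚ) := by
      rw [← Finset.sum_sub_distrib]
      rw [Finset.sum_eq_single j]
      · intro i _ hij; rw [h i hij]; ring
      · simp
    rw [hm, hm'] at hsub
    rw [← hsub]; push_cast; ring
  have hq0 : ((q j : ℚ)) ≠ 0 := by positivity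
  have key2 : ((a j : ℤ) - a' j : ℤ) = (q j : ℤ) * (m - m') := by
    have hc : (((a j : ℤ) - a' j : ℤ) : ℚ) = (((q j : ℤ) * (m - m') : ℤ) : ℚ) := by
      push_cast
      push_cast at hdiff
      field_simp at hdiff
      linarith
    exact_mod_cast hc
  have hdvd : ((q j : ℤ)) ∣ ((a j : ℤ) - a' j) := ⟨m - m', key2⟩
  have := eq_of_modeq_Icc (hmem j) (hmem' j) hdvd
  funext i
  by_cases hij : i = j
  · rw [hij]; exact this
  · exact h i hij

lemma sum_restrict_le {k : ℕ} (q : Fin k → ℕ) (j : Fin k) (f : Fin k → ℕ → ℝ)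
    (hf : ∀ i b, 0 ≤ f i b) (hfj : ∀ b, f j b = 1) :
    ∑ a ∈ Sset k q, ∏ i, f i (a i) ≤ ∏ i ∈ Finset.univ.erase j, ∑ b ∈ CI (q i), f i b := by
  classical
  set D : Fin k → Finset ℕ := fun i => if i = j then {1} else CI (q i) with hD
  have step1 : ∑ a ∈ Sset k q, ∏ i, f i (a i)
      = ∑ t ∈ (Sset k q).image (fun a => Function.update a j 1), ∏ i, f i (t i) := by
    rw [Finset.sum_image]
    · apply Finset.sum_congr rfl
      intro a _
      apply Finset.prod_congr rfl
      intro i _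
      by_cases hij : i = j
      · subst hij; rw [Function.update_self, hfj, hfj]
      · rw [Function.update_of_ne hij]
    · intro a ha a' ha' h
      apply coord_determined j ha ha'
      intro i hij
      have := congrFun h i
      beta_reduce at this
      rwa [Function.update_of_ne hij, Function.update_of_ne hij] at this
  rw [step1]
  have step2 : ∑ t ∈ (Sset k q).image (fun a => Function.update a j 1), ∏ i, f i (t i)
      ≤ ∑ t ∈ Fintype.piFinset D, ∏ i, f i (t i) := by
    apply Finset.sum_le_sum_of_subset_of_nonneg
    · intro t ht
      rw [Finset.mem_image] at ht
      obtain ⟨a, ha, rfl⟩ := ht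
      rw [mem_Sset] at ha
      rw [Fintype.mem_piFinset]
      intro i
      by_cases hij : i = j
      · subst hij; rw [Function.update_self, hD]; simp
      · rw [Function.update_of_ne hij, hD]
        simp only [hij, if_false]
        rw [CI, Finset.mem_filter]
        exact ⟨ha.1 i, ha.2.1 i⟩
    · intro t _ _
      exact Finset.prod_nonneg fun i _ => hf i (t i)
  refine step2.trans ?_
  rw [← Finset.prod_univ_sum]
  rw [← Finset.mul_prod_erase Finset.univ _ (Finset.mem_univ j)]
  have hDj : ∑ b ∈ D j, f j b = 1 := by rw [hD]; simp [hfj]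
  rw [hDj, one_mul]
  apply le_of_eq
  apply Finset.prod_congr rfl
  intro i hi
  rw [Finset.mem_erase] at hi
  rw [hD]; simp only [hi.1, if_false]

noncomputable def Wq (q : ℕ) (g : ℝ → ℂ) : ℝ :=
  ∑ b ∈ CI q, ‖g ((b : ℝ) / (q : ℝ))‖ ^ 2

lemma Wq_nonneg (q : ℕ) (g : ℝ → ℂ) : 0 ≤ Wq q g :=
  Finset.sum_nonneg fun b _ => sq_nonneg _

def Ineq (k : ℕ) (q : Fin k → ℕ) (G : Fin k → ℝ → ℂ) : Prop :=
  ‖∑ a ∈ Sset k q, ∏ i, G i ((a i : ℝ) / (q i : ℝ))‖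
    ≤ (((Finset.univ.lcm q : ℕ) : ℝ))⁻¹ * ∏ i, Real.sqrt ((q i : ℝ) * Wq (q i) (G i))

lemma lemA' {k : ℕ} (q : Fin k → ℕ) (hq : ∀ i, 0 < q i) (G : Fin k → ℝ → ℂ)
    (i₀ j₀ : Fin k) (hne : i₀ ≠ j₀) (h1 : ∀ i, q i ∣ q i₀) (h2 : ∀ i, q i ∣ q j₀) :
    Ineq k q G := by
  classical
  unfold Ineq
  set g : Fin k → ℕ → ℝ := fun i b => ‖G i ((b : ℝ) / (q i : ℝ))‖ with hg
  have hgnn : ∀ i b, 0 ≤ g i b := fun i b => norm_nonneg _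
  set W : Fin k → ℝ := fun i => Wq (q i) (G i) with hW
  have hWnn : ∀ i, 0 ≤ W i := fun i => Wq_nonneg _ _
  have hWsum : ∀ i, W i = ∑ b ∈ CI (q i), g i b ^ 2 := fun i => rfl
  -- Step 1 : bound by absolute values
  have step1 : ‖∑ a ∈ Sset k q, ∏ i, G i ((a i : ℝ) / (q i : ℝ))‖
      ≤ ∑ a ∈ Sset k q, ∏ i, g i (a i) := by
    refine (norm_sum_le _ _).trans ?_
    apply le_of_eq
    apply Finset.sum_congr rfl
    intro a _
    rw [norm_prod]
  -- Cauchy–Schwarz setup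
  set uf : Fin k → ℕ → ℝ := fun i b => if i = j₀ then 1 else g i b with huf
  set u : ((i : Fin k) → ℕ) → ℝ := fun a => ∏ i, uf i (a i) with hu
  set v : ((i : Fin k) → ℕ) → ℝ := fun a => g j₀ (a j₀) with hv
  have hunn : ∀ a, 0 ≤ u a := fun a => Finset.prod_nonneg fun i _ => by
    rw [huf]; dsimp only; split
    · exact zero_le_one
    · exact hgnn _ _
  have huv : ∀ a, (∏ i, g i (a i)) = u a * v a := by
    intro a
    rw [hu, hv]
    dsimp only
    rw [← Finset.prod_erase_mul Finset.univ (fun i => g i (a i)) (Finset.mem_univ j₀),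
        ← Finset.prod_erase_mul Finset.univ (fun i => uf i (a i)) (Finset.mem_univ j₀)]
    have huf1 : uf j₀ (a j₀) = 1 := by rw [huf]; simp
    rw [huf1, mul_one]
    congr 1
    apply Finset.prod_congr rfl
    intro i hi
    rw [Finset.mem_erase] at hi
    rw [huf]; simp only [hi.1, if_false]
  have step2 : ∑ a ∈ Sset k q, ∏ i, g i (a i)
      ≤ Real.sqrt (∑ a ∈ Sset k q, u a ^ 2) * Real.sqrt (∑ a ∈ Sset k q, v a ^ 2) := by
    calc ∑ a ∈ Sset k q, ∏ i, g i (a i) = ∑ a ∈ Sset k q, u a * v a := by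
          apply Finset.sum_congr rfl; intro a _; exact huv a
      _ ≤ _ := sum_mul_le_sqrt_mul_sqrt _ u v (fun a _ => hunn a) (fun a _ => hgnn _ _)
  -- bound ∑ u²
  have stepu : ∑ a ∈ Sset k q, u a ^ 2 ≤ ∏ i ∈ Finset.univ.erase j₀, W i := by
    have : ∀ a : (i : Fin k) → ℕ, u a ^ 2 = ∏ i, (uf i (a i)) ^ 2 := by
      intro a; rw [hu]; dsimp only; rw [← Finset.prod_pow]
    calc ∑ a ∈ Sset k q, u a ^ 2 = ∑ a ∈ Sset k q, ∏ i, (uf i (a i)) ^ 2 := by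
          apply Finset.sum_congr rfl; intro a _; exact this a
      _ ≤ ∏ i ∈ Finset.univ.erase j₀, ∑ b ∈ CI (q i), (uf i b) ^ 2 := by
          apply sum_restrict_le q j₀ (fun i b => (uf i b) ^ 2)
              (fun i b => sq_nonneg _)
          intro b; rw [huf]; simp
      _ = ∏ i ∈ Finset.univ.erase j₀, W i := by
          apply Finset.prod_congr rfl
          intro i hi
          rw [Finset.mem_erase] at hi
          rw [hWsum]
          apply Finset.sum_congr rfl
          intro b _
          rw [huf]; simp only [hi.1, if_false]
  -- bound ∑ v²
  set P : ℝ := ∏ i ∈ (Finset.univ.erase i₀).erase j₀, ((CI (q i)).card : ℝ) with hP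
  have stepv : ∑ a ∈ Sset k q, v a ^ 2 ≤ W j₀ * P := by
    set f : Fin k → ℕ → ℝ := fun i b => if i = j₀ then (g j₀ b) ^ 2 else 1 with hf
    have hval : ∀ a : (i : Fin k) → ℕ, v a ^ 2 = ∏ i, f i (a i) := by
      intro a
      rw [hv, hf]
      dsimp only
      rw [Finset.prod_ite_eq' Finset.univ j₀ (fun i => (g j₀ (a i)) ^ 2)]
      simp
    calc ∑ a ∈ Sset k q, v a ^ 2 = ∑ a ∈ Sset k q, ∏ i, f i (a i) := by
          apply Finset.sum_congr rfl; intro a _; exact hval a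
      _ ≤ ∏ i ∈ Finset.univ.erase i₀, ∑ b ∈ CI (q i), f i b := by
          apply sum_restrict_le q i₀ f
          · intro i b; rw [hf]; dsimp only; split
            · exact sq_nonneg _
            · exact zero_le_one
          · intro b; rw [hf]; simp only [if_neg hne]
      _ = W j₀ * P := by
          rw [← Finset.mul_prod_erase (Finset.univ.erase i₀) _
            (Finset.mem_erase.mpr ⟨Ne.symm hne, Finset.mem_univ j₀⟩)]
          congr 1
          · rw [hWsum]
            apply Finset.sum_congr rfl
            intro b _
            rw [hf]; simp
          · rw [hP]
            apply Finset.prod_congr rfl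
            intro i hi
            rw [Finset.mem_erase] at hi
            rw [hf]; simp only [hi.1, if_false]
            rw [Finset.sum_const, nsmul_eq_mul, mul_one]
  -- lcm equals q i₀
  have hQ : (Finset.univ.lcm q : ℕ) = q i₀ :=
    Nat.dvd_antisymm (Finset.lcm_dvd fun i _ => h1 i) (Finset.dvd_lcm (Finset.mem_univ i₀))
  have hijq : q i₀ = q j₀ := Nat.dvd_antisymm (h2 i₀) (h1 j₀)
  -- final arithmetic
  have hcard : ∀ i, ((CI (q i)).card : ℝ) ≤ (q i : ℝ) := by
    intro i
    have : (CI (q i)).card ≤ (Finset.Icc 1 (q i)).card := Finset.card_filter_le _ _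
    rw [Nat.card_Icc] at this
    exact_mod_cast this.trans (by omega)
  have hPnn : 0 ≤ P := Finset.prod_nonneg fun i _ => by positivity
  have hprodq : ∏ i, (q i : ℝ) = (q i₀ : ℝ) * ((q j₀ : ℝ) *
      ∏ i ∈ (Finset.univ.erase i₀).erase j₀, (q i : ℝ)) := by
    rw [Finset.mul_prod_erase (Finset.univ.erase i₀) (fun i => (q i : ℝ))
      (Finset.mem_erase.mpr ⟨Ne.symm hne, Finset.mem_univ j₀⟩)]
    rw [Finset.mul_prod_erase Finset.univ (fun i => (q i : ℝ)) (Finset.mem_univ i₀)]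
  have hq0 : (0 : ℝ) < (q i₀ : ℝ) := by exact_mod_cast hq i₀
  have final : Real.sqrt (∏ i ∈ Finset.univ.erase j₀, W i) * Real.sqrt (W j₀ * P)
      ≤ ((q i₀ : ℝ))⁻¹ * ∏ i, Real.sqrt ((q i : ℝ) * W i) := by
    rw [← Real.sqrt_mul (Finset.prod_nonneg fun i _ => hWnn i)]
    rw [prod_sqrt _ _ (fun i _ => mul_nonneg (by positivity) (hWnn i))]
    rw [show ((q i₀ : ℝ))⁻¹ = Real.sqrt (((q i₀ : ℝ))⁻¹ ^ 2) by
      rw [Real.sqrt_sq (by positivity)]]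
    rw [← Real.sqrt_mul (by positivity)]
    apply Real.sqrt_le_sqrt
    rw [Finset.prod_mul_distrib]
    rw [hprodq]
    have hWW : (∏ i ∈ Finset.univ.erase j₀, W i) * (W j₀ * P) = (∏ i, W i) * P := by
      rw [← Finset.prod_erase_mul Finset.univ _ (Finset.mem_univ j₀)]; ring
    rw [hWW]
    have hPle : P ≤ ∏ i ∈ (Finset.univ.erase i₀).erase j₀, (q i : ℝ) := by
      rw [hP]
      apply Finset.prod_le_prod (fun i _ => by positivity) (fun i _ => hcard i)
    have hWprodnn : 0 ≤ ∏ i, W i := Finset.prod_nonneg fun i _ => hWnn i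
    calc (∏ i, W i) * P ≤ (∏ i, W i) * ∏ i ∈ (Finset.univ.erase i₀).erase j₀, (q i : ℝ) :=
          mul_le_mul_of_nonneg_left hPle hWprodnn
      _ = ((q i₀ : ℝ))⁻¹ ^ 2 * ((q i₀ : ℝ) * ((q j₀ : ℝ) *
            ∏ i ∈ (Finset.univ.erase i₀).erase j₀, (q i : ℝ)) * ∏ i, W i) := by
          rw [← hijq]
          field_simp
  calc ‖∑ a ∈ Sset k q, ∏ i, G i ((a i : ℝ) / (q i : ℝ))‖
      ≤ ∑ a ∈ Sset k q, ∏ i, g i (a i) := step1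
    _ ≤ Real.sqrt (∑ a ∈ Sset k q, u a ^ 2) * Real.sqrt (∑ a ∈ Sset k q, v a ^ 2) := step2
    _ ≤ Real.sqrt (∏ i ∈ Finset.univ.erase j₀, W i) * Real.sqrt (W j₀ * P) := by
        apply mul_le_mul
        · exact Real.sqrt_le_sqrt stepu
        · exact Real.sqrt_le_sqrt stepv
        · exact Real.sqrt_nonneg _
        · exact Real.sqrt_nonneg _
    _ ≤ ((q i₀ : ℝ))⁻¹ * ∏ i, Real.sqrt ((q i : ℝ) * W i) := final
    _ = (((Finset.univ.lcm q : ℕ) : ℝ))⁻¹ * ∏ i, Real.sqrt ((q i : ℝ) * W i) := by rw [hQ]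
lemma Sset_empty_of_unique_max {k : ℕ} (p : ℕ) (pp : p.Prime) (E : Fin k → ℕ) (i₀ : Fin k)
    (hmax : ∀ j, j ≠ i₀ → E j < E i₀) (hpos : 1 ≤ E i₀) :
    Sset k (fun i => p ^ E i) = ∅ := by
  rw [Finset.eq_empty_iff_forall_notMem]
  intro a ha
  rw [mem_Sset] at ha
  obtain ⟨hmem, hcop, m, hm⟩ := ha
  set e := E i₀ with he
  have hle : ∀ i, E i ≤ e := by
    intro i
    by_cases hi : i = i₀
    · rw [hi]
    · exact (hmax i hi).le
  have hp0 : ((p : ℚ)) ≠ 0 := by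
    have := pp.pos; positivity
  have hm' : ∑ i, (a i : ℚ) / (p : ℚ) ^ (E i) = (m : ℚ) := by
    push_cast at hm; exact hm
  have hm2 : ∑ i, (a i : ℚ) * (p : ℚ) ^ (e - E i) = (m : ℚ) * (p : ℚ) ^ e := by
    have h3 := congrArg (fun x : ℚ => x * (p : ℚ) ^ e) hm'
    rw [Finset.sum_mul] at h3
    rw [← h3]
    apply Finset.sum_congr rfl
    intro i _
    have hpe : (p : ℚ) ^ e = (p : ℚ) ^ (E i) * (p : ℚ) ^ (e - E i) := by
      rw [← pow_add, Nat.add_sub_cancel' (hle i)]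
    rw [hpe]
    field_simp
  have key : ∑ i, (a i : ℤ) * (p : ℤ) ^ (e - E i) = m * (p : ℤ) ^ e := by
    exact_mod_cast hm2
  have hdvd : (p : ℤ) ∣ (a i₀ : ℤ) := by
    have hsplit : (a i₀ : ℤ) = m * (p : ℤ) ^ e - ∑ i ∈ Finset.univ.erase i₀, (a i : ℤ) * (p : ℤ) ^ (e - E i) := by
      rw [← key, ← Finset.sum_erase_add Finset.univ _ (Finset.mem_univ i₀)]
      rw [he]
      simp
    rw [hsplit]
    apply dvd_sub
    · exact Dvd.dvd.mul_left (dvd_pow_self (p : ℤ) (by omega)) m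
    · apply Finset.dvd_sum
      intro i hi
      rw [Finset.mem_erase] at hi
      have : e - E i ≠ 0 := by have := hmax i hi.1; omega
      exact Dvd.dvd.mul_left (dvd_pow_self (p : ℤ) this) _
  have hdvdn : p ∣ a i₀ := by exact_mod_cast hdvd
  have hdvdp : p ∣ p ^ e := dvd_pow_self p (by omega)
  have := Nat.dvd_gcd hdvdn hdvdp
  rw [hcop i₀] at this
  have := Nat.le_of_dvd one_pos this
  have := pp.one_lt
  omega

lemma lemLP {k : ℕ} (hk : 2 ≤ k) (p : ℕ) (pp : p.Prime) (E : Fin k → ℕ)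
    (G : Fin k → ℝ → ℂ) :
    Ineq k (fun i => p ^ E i) G := by
  have hne0 : (Finset.univ : Finset (Fin k)).Nonempty := ⟨⟨0, by omega⟩, Finset.mem_univ _⟩
  obtain ⟨i₀, -, hmax⟩ := Finset.exists_max_image Finset.univ E hne0
  by_cases hcase : ∃ j₀, j₀ ≠ i₀ ∧ E j₀ = E i₀
  · obtain ⟨j₀, hne, hEj⟩ := hcase
    apply lemA' _ (fun i => pow_pos pp.pos _) G i₀ j₀ (Ne.symm hne)
    · intro i; exact pow_dvd_pow p (hmax i (Finset.mem_univ i))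
    · intro i
      rw [hEj]
      exact pow_dvd_pow p (hmax i (Finset.mem_univ i))
  · push_neg at hcase
    have hlt : ∀ j, j ≠ i₀ → E j < E i₀ :=
      fun j hj => lt_of_le_of_ne (hmax j (Finset.mem_univ j)) (hcase j hj)
    have hpos : 1 ≤ E i₀ := by
      have hcard : 1 < Fintype.card (Fin k) := by rw [Fintype.card_fin]; omega
      obtain ⟨j, hj⟩ := Fintype.exists_ne_of_one_lt_card hcard i₀
      have := hlt j hj
      omega
    unfold Ineq
    rw [Sset_empty_of_unique_max p pp E i₀ hlt hpos]
    simp only [Finset.sum_empty, norm_zero]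
    apply mul_nonneg
    · positivity
    · exact Finset.prod_nonneg fun i _ => Real.sqrt_nonneg _
def psi (P m b c : ℕ) : ℕ := rep (b * m + c * P) (P * m)

lemma mem_CI {q b : ℕ} : b ∈ CI q ↔ b ∈ Finset.Icc 1 q ∧ b.Coprime q := by
  unfold CI; rw [Finset.mem_filter]

lemma psi_mem {P m : ℕ} (hP : 0 < P) (hm : 0 < m) (hco : P.Coprime m)
    {b c : ℕ} (hb : b ∈ CI P) (hc : c ∈ CI m) : psi P m b c ∈ CI (P * m) := by
  rw [mem_CI] at hb hc ⊢
  have hPm : 0 < P * m := Nat.mul_pos hP hm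
  constructor
  · exact rep_mem hPm _
  · apply coprime_of_modEq (y := b * m + c * P) (rep_modeq _ _)
    apply Nat.Coprime.mul_right
    · -- coprime (b*m + c*P) P
      apply coprime_of_modEq (y := b * m) ?_ (Nat.Coprime.mul hb.2 (hco.symm))
      have h0 : c * P ≡ 0 [MOD P] := (Nat.modEq_zero_iff_dvd).mpr (Dvd.dvd.mul_left dvd_rfl c)
      calc b * m + c * P ≡ b * m + 0 [MOD P] := Nat.ModEq.add_left _ h0
        _ = b * m := by ring
    · apply coprime_of_modEq (y := c * P) ?_ (Nat.Coprime.mul hc.2 hco)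
      have h0 : b * m ≡ 0 [MOD m] := (Nat.modEq_zero_iff_dvd).mpr (Dvd.dvd.mul_left dvd_rfl b)
      calc b * m + c * P ≡ 0 + c * P [MOD m] := Nat.ModEq.add_right _ h0
        _ = c * P := by ring

lemma psi_shift {P m : ℕ} (hP : 0 < P) (hm : 0 < m) {b c : ℕ} :
    ∃ t : ℤ, ((psi P m b c : ℚ)) / ((P : ℚ) * (m : ℚ))
      = (b : ℚ) / (P : ℚ) + (c : ℚ) / (m : ℚ) + (t : ℚ) := by
  have hmod : psi P m b c ≡ b * m + c * P [MOD P * m] := rep_modeq _ _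
  obtain ⟨t, ht⟩ := hmod.dvd
  refine ⟨-t, ?_⟩
  have hP0 : ((P : ℚ)) ≠ 0 := by
    have := hP; positivity
  have hm0 : ((m : ℚ)) ≠ 0 := by
    have := hm; positivity
  have hq : ((psi P m b c : ℚ)) = (b : ℚ) * m + (c : ℚ) * P - ((P : ℚ) * m) * t := by
    have h2 : ((b * m + c * P : ℕ) : ℤ) - (psi P m b c : ℤ) = ((P * m : ℕ) : ℤ) * t := ht
    have h3 := congrArg (fun z : ℤ => (z : ℚ)) h2
    push_cast at h3
    linarith
  rw [hq]
  field_simp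
  push_cast
  ring

lemma psi_inj {P m : ℕ} (hco : P.Coprime m) {b c b' c' : ℕ} (hb : b ∈ CI P) (hc : c ∈ CI m) (hb' : b' ∈ CI P)
    (hc' : c' ∈ CI m) (h : psi P m b c = psi P m b' c') : b = b' ∧ c = c' := by
  rw [mem_CI] at hb hc hb' hc'
  have h1 : b * m + c * P ≡ b' * m + c' * P [MOD P * m] := by
    have e1 := rep_modeq (b * m + c * P) (P * m)
    have e2 := rep_modeq (b' * m + c' * P) (P * m)
    unfold psi at h
    exact (e1.symm.trans (h ▸ e2))
  have hdvd := h1.dvd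
  -- hdvd : (P*m : ℤ) ∣ (b'*m + c'*P) - (b*m + c*P)
  have hcoZP : IsCoprime ((P : ℤ)) ((m : ℤ)) := by
    rw [Int.isCoprime_iff_gcd_eq_one]
    exact_mod_cast hco
  have hbb : b = b' := by
    have hdP : (P : ℤ) ∣ ((b' : ℤ) - b) * m := by
      have h2 : (P : ℤ) ∣ ((b' * m + c' * P : ℕ) : ℤ) - ((b * m + c * P : ℕ) : ℤ) :=
        dvd_trans ⟨m, by push_cast; ring⟩ hdvd
      have h3 : ((b' * m + c' * P : ℕ) : ℤ) - ((b * m + c * P : ℕ) : ℤ)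
          = ((b' : ℤ) - b) * m + ((c' : ℤ) - c) * P := by push_cast; ring
      rw [h3] at h2
      have h4 : (P : ℤ) ∣ ((c' : ℤ) - c) * P := ⟨(c' : ℤ) - c, mul_comm _ _⟩
      have h5 := dvd_sub h2 h4
      have h6 : ((b' : ℤ) - b) * m + ((c' : ℤ) - c) * P - ((c' : ℤ) - c) * P
          = ((b' : ℤ) - b) * m := by ring
      rwa [h6] at h5
    have h5 : (P : ℤ) ∣ ((b' : ℤ) - b) := hcoZP.dvd_of_dvd_mul_right hdP
    refine eq_of_modeq_Icc hb.1 hb'.1 ?_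
    rw [show (b : ℤ) - b' = -(((b' : ℤ) - b)) by ring]
    exact dvd_neg.mpr h5
  have hcc : c = c' := by
    have hdm : (m : ℤ) ∣ ((c' : ℤ) - c) * P := by
      have h2 : (m : ℤ) ∣ ((b' * m + c' * P : ℕ) : ℤ) - ((b * m + c * P : ℕ) : ℤ) :=
        dvd_trans ⟨P, by push_cast; ring⟩ hdvd
      have h3 : ((b' * m + c' * P : ℕ) : ℤ) - ((b * m + c * P : ℕ) : ℤ)
          = ((b' : ℤ) - b) * m + ((c' : ℤ) - c) * P := by push_cast; ring
      rw [h3] at h2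
      have h4 : (m : ℤ) ∣ ((b' : ℤ) - b) * m := ⟨(b' : ℤ) - b, mul_comm _ _⟩
      have h5 := dvd_sub h2 h4
      have h6 : ((b' : ℤ) - b) * m + ((c' : ℤ) - c) * P - ((b' : ℤ) - b) * m
          = ((c' : ℤ) - c) * P := by ring
      rwa [h6] at h5
    have h5 : (m : ℤ) ∣ ((c' : ℤ) - c) := hcoZP.symm.dvd_of_dvd_mul_right hdm
    refine eq_of_modeq_Icc hc.1 hc'.1 ?_
    rw [show (c : ℤ) - c' = -(((c' : ℤ) - c)) by ring]
    exact dvd_neg.mpr h5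
  exact ⟨hbb, hcc⟩

lemma psi_surj {P m : ℕ} (hP : 0 < P) (hm : 0 < m) (hco : P.Coprime m)
    {a : ℕ} (ha : a ∈ CI (P * m)) :
    ∃ b ∈ CI P, ∃ c ∈ CI m, psi P m b c = a := by
  rw [mem_CI] at ha
  haveI : NeZero P := ⟨hP.ne'⟩
  haveI : NeZero m := ⟨hm.ne'⟩
  have hcoaP : a.Coprime P := Nat.Coprime.coprime_dvd_right (dvd_mul_right P m) ha.2
  have hcoam : a.Coprime m := Nat.Coprime.coprime_dvd_right (dvd_mul_left m P) ha.2
  set uB : (ZMod P)ˣ := ZMod.unitOfCoprime a hcoaP * (ZMod.unitOfCoprime m hco.symm)⁻¹ with huB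
  set uC : (ZMod m)ˣ := ZMod.unitOfCoprime a hcoam * (ZMod.unitOfCoprime P hco)⁻¹ with huC
  set b := rep ((uB : ZMod P).val) P with hb
  set c := rep ((uC : ZMod m).val) m with hc
  have hbCI : b ∈ CI P := by
    rw [mem_CI]
    exact ⟨rep_mem hP _, coprime_of_modEq (rep_modeq _ _) (ZMod.val_coe_unit_coprime uB)⟩
  have hcCI : c ∈ CI m := by
    rw [mem_CI]
    exact ⟨rep_mem hm _, coprime_of_modEq (rep_modeq _ _) (ZMod.val_coe_unit_coprime uC)⟩
  refine ⟨b, hbCI, c, hcCI, ?_⟩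
  -- congruences
  have hbZ : ((b : ℕ) : ZMod P) = (uB : ZMod P) := by
    have h1 : ((b : ℕ) : ZMod P) = (((uB : ZMod P).val : ℕ) : ZMod P) := by
      rw [ZMod.natCast_eq_natCast_iff]
      exact rep_modeq _ _
    rw [h1, ZMod.natCast_val, ZMod.cast_id]
  have hcZ : ((c : ℕ) : ZMod m) = (uC : ZMod m) := by
    have h1 : ((c : ℕ) : ZMod m) = (((uC : ZMod m).val : ℕ) : ZMod m) := by
      rw [ZMod.natCast_eq_natCast_iff]
      exact rep_modeq _ _
    rw [h1, ZMod.natCast_val, ZMod.cast_id]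
  have hmodP : b * m + c * P ≡ a [MOD P] := by
    rw [← ZMod.natCast_eq_natCast_iff]
    push_cast
    rw [hbZ]
    rw [ZMod.natCast_self, mul_zero, add_zero]
    rw [huB]
    push_cast
    rw [mul_assoc]
    have : ((ZMod.unitOfCoprime m hco.symm)⁻¹ : (ZMod P)ˣ) * (m : ZMod P)
        = 1 := by
      have hm' : ((ZMod.unitOfCoprime m hco.symm : (ZMod P)ˣ) : ZMod P) = (m : ZMod P) :=
        ZMod.coe_unitOfCoprime m hco.symm
      calc ((ZMod.unitOfCoprime m hco.symm)⁻¹ : (ZMod P)ˣ) * (m : ZMod P)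
          = ((ZMod.unitOfCoprime m hco.symm)⁻¹ : (ZMod P)ˣ)
            * (ZMod.unitOfCoprime m hco.symm : (ZMod P)ˣ) := by rw [hm']
        _ = 1 := by
            rw [← Units.val_mul, inv_mul_cancel]
            rfl
    rw [this, mul_one, ZMod.coe_unitOfCoprime]
  have hmodm : b * m + c * P ≡ a [MOD m] := by
    rw [← ZMod.natCast_eq_natCast_iff]
    push_cast
    rw [hcZ]
    rw [ZMod.natCast_self, mul_zero, zero_add]
    rw [huC]
    push_cast
    rw [mul_assoc]
    have : ((ZMod.unitOfCoprime P hco)⁻¹ : (ZMod m)ˣ) * (P : ZMod m) = 1 := by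
      have hm' : ((ZMod.unitOfCoprime P hco : (ZMod m)ˣ) : ZMod m) = (P : ZMod m) :=
        ZMod.coe_unitOfCoprime P hco
      calc ((ZMod.unitOfCoprime P hco)⁻¹ : (ZMod m)ˣ) * (P : ZMod m)
          = ((ZMod.unitOfCoprime P hco)⁻¹ : (ZMod m)ˣ)
            * (ZMod.unitOfCoprime P hco : (ZMod m)ˣ) := by rw [hm']
        _ = 1 := by
            rw [← Units.val_mul, inv_mul_cancel]
            rfl
    rw [this, mul_one, ZMod.coe_unitOfCoprime]
  have hmod : b * m + c * P ≡ a [MOD P * m] :=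
    (Nat.modEq_and_modEq_iff_modEq_mul hco).mp ⟨hmodP, hmodm⟩
  exact rep_eq (Nat.mul_pos hP hm) ha.1 hmod

lemma psi_shift_real {P m : ℕ} (hP : 0 < P) (hm : 0 < m) (b c : ℕ) :
    ∃ t : ℤ, ((psi P m b c : ℝ)) / (((P * m : ℕ)) : ℝ)
      = (b : ℝ) / (P : ℝ) + (c : ℝ) / (m : ℝ) + (t : ℝ) := by
  obtain ⟨t, ht⟩ := psi_shift hP hm (b := b) (c := c)
  refine ⟨t, ?_⟩
  have h2 := congrArg (fun z : ℚ => (z : ℝ)) ht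
  push_cast at h2 ⊢
  exact h2

lemma G_psi {α : Type*} {G : ℝ → α} (hG : ∀ x, G (x + 1) = G x) {P m : ℕ}
    (hP : 0 < P) (hm : 0 < m) (b c : ℕ) :
    G ((psi P m b c : ℝ) / ((P * m : ℕ) : ℝ)) = G ((b : ℝ) / (P : ℝ) + (c : ℝ) / (m : ℝ)) := by
  obtain ⟨t, ht⟩ := psi_shift_real hP hm b c
  rw [ht, per_int hG t]

lemma sum1_split {P m : ℕ} (hP : 0 < P) (hm : 0 < m) (hco : P.Coprime m)
    (F : ℝ → ℝ) (hF : ∀ x, F (x + 1) = F x) :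
    ∑ a ∈ CI (P * m), F ((a : ℝ) / ((P * m : ℕ) : ℝ))
      = ∑ x ∈ (CI P) ×ˢ (CI m), F ((x.1 : ℝ) / (P : ℝ) + (x.2 : ℝ) / (m : ℝ)) := by
  symm
  apply Finset.sum_bij (fun (x : ℕ × ℕ) _ => psi P m x.1 x.2)
  · intro x hx
    rw [Finset.mem_product] at hx
    exact psi_mem hP hm hco hx.1 hx.2
  · intro x hx y hy h
    rw [Finset.mem_product] at hx hy
    have := psi_inj hco hx.1 hx.2 hy.1 hy.2 h
    exact Prod.ext this.1 this.2
  · intro a ha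
    obtain ⟨b, hb, c, hc, hpsi⟩ := psi_surj hP hm hco ha
    exact ⟨(b, c), Finset.mem_product.mpr ⟨hb, hc⟩, hpsi⟩
  · intro x hx
    exact (G_psi hF hP hm x.1 x.2).symm

lemma sumk_split {k : ℕ} (P m : Fin k → ℕ) (hP : ∀ i, 0 < P i) (hm : ∀ i, 0 < m i)
    (hco : ∀ i, (P i).Coprime (m i)) (hCO : (∏ i, P i).Coprime (∏ i, m i))
    (G : Fin k → ℝ → ℂ) (hG : ∀ i x, G i (x + 1) = G i x) :
    ∑ a ∈ Sset k (fun i => P i * m i), ∏ i, G i ((a i : ℝ) / ((P i * m i : ℕ) : ℝ))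
      = ∑ x ∈ (Sset k P) ×ˢ (Sset k m),
          ∏ i, G i ((x.1 i : ℝ) / (P i : ℝ) + (x.2 i : ℝ) / (m i : ℝ)) := by
  classical
  symm
  apply Finset.sum_bij
    (fun (x : ((i : Fin k) → ℕ) × ((i : Fin k) → ℕ)) _ => fun i => psi (P i) (m i) (x.1 i) (x.2 i))
  · -- maps into Sset
    intro x hx
    rw [Finset.mem_product] at hx
    obtain ⟨hx1, hx2⟩ := hx
    rw [mem_Sset] at hx1 hx2 ⊢
    obtain ⟨hb1, hb2, mb, hmb⟩ := hx1
    obtain ⟨hc1, hc2, mc, hmc⟩ := hx2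
    have hmemCI : ∀ i, psi (P i) (m i) (x.1 i) (x.2 i) ∈ CI (P i * m i) := by
      intro i
      exact psi_mem (hP i) (hm i) (hco i) (mem_CI.mpr ⟨hb1 i, hb2 i⟩) (mem_CI.mpr ⟨hc1 i, hc2 i⟩)
    refine ⟨fun i => (mem_CI.mp (hmemCI i)).1, fun i => (mem_CI.mp (hmemCI i)).2, ?_⟩
    have hshift : ∀ i, ∃ t : ℤ, ((psi (P i) (m i) (x.1 i) (x.2 i) : ℚ)) / ((P i : ℚ) * (m i : ℚ))
        = (x.1 i : ℚ) / (P i : ℚ) + (x.2 i : ℚ) / (m i : ℚ) + (t : ℚ) :=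
      fun i => psi_shift (hP i) (hm i)
    choose t ht using hshift
    refine ⟨mb + mc + ∑ i, t i, ?_⟩
    have hterm : ∀ i : Fin k, (psi (P i) (m i) (x.1 i) (x.2 i) : ℚ) / ((P i * m i : ℕ) : ℚ)
        = (x.1 i : ℚ) / (P i : ℚ) + (x.2 i : ℚ) / (m i : ℚ) + (t i : ℚ) := by
      intro i
      rw [← ht i]
      congr 1
      push_cast
      ring
    rw [Finset.sum_congr rfl (fun i _ => hterm i)]
    rw [Finset.sum_add_distrib, Finset.sum_add_distrib, hmb, hmc]
    push_cast
    ring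
  · -- injective
    intro x hx y hy h
    rw [Finset.mem_product, mem_Sset, mem_Sset] at hx hy
    obtain ⟨⟨hx11, hx12, -⟩, hx21, hx22, -⟩ := hx
    obtain ⟨⟨hy11, hy12, -⟩, hy21, hy22, -⟩ := hy
    have key : ∀ i, x.1 i = y.1 i ∧ x.2 i = y.2 i := fun i =>
      psi_inj (hco i) (mem_CI.mpr ⟨hx11 i, hx12 i⟩) (mem_CI.mpr ⟨hx21 i, hx22 i⟩)
        (mem_CI.mpr ⟨hy11 i, hy12 i⟩) (mem_CI.mpr ⟨hy21 i, hy22 i⟩) (congrFun h i)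
    exact Prod.ext (funext fun i => (key i).1) (funext fun i => (key i).2)
  · -- surjective
    intro a ha
    rw [mem_Sset] at ha
    obtain ⟨ha1, ha2, ma, hma⟩ := ha
    have hsurj : ∀ i, ∃ b ∈ CI (P i), ∃ c ∈ CI (m i), psi (P i) (m i) b c = a i :=
      fun i => psi_surj (hP i) (hm i) (hco i) (mem_CI.mpr ⟨ha1 i, ha2 i⟩)
    choose b hb c hc hpsi using hsurj
    have hshift : ∀ i, ∃ t : ℤ, ((a i : ℚ)) / ((P i : ℚ) * (m i : ℚ))
        = (b i : ℚ) / (P i : ℚ) + (c i : ℚ) / (m i : ℚ) + (t : ℚ) := by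
      intro i
      obtain ⟨t, ht⟩ := psi_shift (hP i) (hm i) (b := b i) (c := c i)
      rw [hpsi i] at ht
      exact ⟨t, ht⟩
    choose t ht using hshift
    -- split integrality
    have hsum : (∑ i, (b i : ℚ) / (P i : ℚ)) + (∑ i, (c i : ℚ) / (m i : ℚ))
        = ((ma - ∑ i, t i : ℤ) : ℚ) := by
      have expand : ∑ i, (a i : ℚ) / ((P i * m i : ℕ) : ℚ)
          = (∑ i, (b i : ℚ) / (P i : ℚ)) + (∑ i, (c i : ℚ) / (m i : ℚ)) + ∑ i, (t i : ℚ) := by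
        rw [← Finset.sum_add_distrib, ← Finset.sum_add_distrib]
        apply Finset.sum_congr rfl
        intro i _
        rw [← ht i]
        congr 1
        push_cast
        ring
      rw [hma] at expand
      push_cast
      push_cast at expand
      linarith
    have hPint : ∃ z : ℤ, (∑ i, (b i : ℚ) / (P i : ℚ)) * ((∏ i, P i : ℕ) : ℚ) = (z : ℚ) := by
      refine ⟨∑ i, (b i : ℤ) * ∏ j ∈ Finset.univ.erase i, (P j : ℤ), ?_⟩
      rw [Finset.sum_mul]
      push_cast
      apply Finset.sum_congr rfl
      intro i _
      have hsplit : ∏ j, (P j : ℚ) = (P i : ℚ) * ∏ j ∈ Finset.univ.erase i, (P j : ℚ) :=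
        (Finset.mul_prod_erase Finset.univ _ (Finset.mem_univ i)).symm
      rw [hsplit]
      have : ((P i : ℚ)) ≠ 0 := by have := hP i; positivity
      field_simp
    have hmint : ∃ z : ℤ, (∑ i, (c i : ℚ) / (m i : ℚ)) * ((∏ i, m i : ℕ) : ℚ) = (z : ℚ) := by
      refine ⟨∑ i, (c i : ℤ) * ∏ j ∈ Finset.univ.erase i, (m j : ℤ), ?_⟩
      rw [Finset.sum_mul]
      push_cast
      apply Finset.sum_congr rfl
      intro i _
      have hsplit : ∏ j, (m j : ℚ) = (m i : ℚ) * ∏ j ∈ Finset.univ.erase i, (m j : ℚ) :=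
        (Finset.mul_prod_erase Finset.univ _ (Finset.mem_univ i)).symm
      rw [hsplit]
      have : ((m i : ℚ)) ≠ 0 := by have := hm i; positivity
      field_simp
    obtain ⟨hbint, hcint⟩ := int_split hCO hPint hmint ⟨_, hsum⟩
    refine ⟨(b, c), ?_, funext fun i => hpsi i⟩
    rw [Finset.mem_product, mem_Sset, mem_Sset]
    exact ⟨⟨fun i => (mem_CI.mp (hb i)).1, fun i => (mem_CI.mp (hb i)).2, hbint⟩,
      ⟨fun i => (mem_CI.mp (hc i)).1, fun i => (mem_CI.mp (hc i)).2, hcint⟩⟩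
  · -- values
    intro x hx
    apply Finset.prod_congr rfl
    intro i _
    exact (G_psi (hG i) (hP i) (hm i) (x.1 i) (x.2 i)).symm
theorem mainInd : ∀ Q : ℕ, ∀ k : ℕ, 2 ≤ k → ∀ q : Fin k → ℕ, (∀ i, 0 < q i) →
    ∀ G : Fin k → ℝ → ℂ, (∀ i x, G i (x + 1) = G i x) → Finset.univ.lcm q = Q →
    Ineq k q G := by
  intro Q
  induction Q using Nat.strong_induction_on with
  | _ Q IH =>
  intro k hk q hq G hG hQ
  have hQ0 : Q ≠ 0 := by
    intro h
    rw [h] at hQ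
    have h2 := Finset.lcm_eq_zero_iff.mp hQ
    simp only [Finset.mem_univ, true_and] at h2
    obtain ⟨i, hi⟩ := h2
    have := hq i
    omega
  by_cases hQ1 : Q = 1
  · -- all moduli are 1
    have hq1 : ∀ i, q i = 1 := by
      intro i
      have := Finset.dvd_lcm (f := q) (Finset.mem_univ i)
      rw [hQ, hQ1] at this
      exact Nat.dvd_one.mp this
    have h01 : (⟨0, by omega⟩ : Fin k) ≠ ⟨1, by omega⟩ := Fin.ne_of_val_ne (by norm_num)
    exact lemA' q hq G ⟨0, by omega⟩ ⟨1, by omega⟩ h01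
      (fun i => by rw [hq1 i]; exact one_dvd _)
      (fun i => by rw [hq1 i]; exact one_dvd _)
  · -- main case
    set p := Q.minFac with hpdef
    have pp : p.Prime := Nat.minFac_prime hQ1
    have hpQ : p ∣ Q := Nat.minFac_dvd Q
    have hq0' : ∀ i, q i ≠ 0 := fun i => (hq i).ne'
    set e : Fin k → ℕ := fun i => (q i).factorization p with hedef
    set P : Fin k → ℕ := fun i => p ^ e i with hPdef
    set mm : Fin k → ℕ := fun i => q i / p ^ e i with hmmdef
    have hfact : ∀ i, P i * mm i = q i := fun i =>
      Nat.ordProj_mul_ordCompl_eq_self (q i) p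
    set E := Q.factorization p with hEdef
    set M := Q / p ^ E with hMdef
    have hEpos : 0 < E := pp.factorization_pos_of_dvd hQ0 hpQ
    have hQPM : p ^ E * M = Q := Nat.ordProj_mul_ordCompl_eq_self Q p
    have hM0 : 0 < M := by
      apply Nat.pos_of_ne_zero
      intro h
      rw [h, mul_zero] at hQPM
      exact hQ0 hQPM.symm
    have hei : ∀ i, e i ≤ E := by
      intro i
      apply (Nat.Prime.pow_dvd_iff_le_factorization pp hQ0).mp
      exact dvd_trans (Nat.ordProj_dvd (q i) p) (hQ ▸ Finset.dvd_lcm (Finset.mem_univ i))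
    have hP0 : ∀ i, 0 < P i := fun i => pow_pos pp.pos _
    have hpmm : ∀ i, ¬ p ∣ mm i := fun i => Nat.not_dvd_ordCompl pp (hq0' i)
    have hm0 : ∀ i, 0 < mm i := by
      intro i
      apply Nat.pos_of_ne_zero
      intro h
      have := hfact i
      rw [h, mul_zero] at this
      exact hq0' i this.symm
    have hcopm : ∀ i, p.Coprime (mm i) := fun i =>
      (Nat.Prime.coprime_iff_not_dvd pp).mpr (hpmm i)
    have hcoi : ∀ i, (P i).Coprime (mm i) := fun i => (hcopm i).pow_left _
    have hmmM : ∀ i, mm i ∣ M := by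
      intro i
      have h1 : mm i ∣ Q := by
        refine dvd_trans ?_ (hQ ▸ Finset.dvd_lcm (Finset.mem_univ i))
        rw [← hfact i]
        exact dvd_mul_left _ _
      have h2 : (mm i).Coprime (p ^ E) := ((hcopm i).symm).pow_right E
      rw [← hQPM] at h1
      exact h2.dvd_of_dvd_mul_left h1
    have hlcmmm : Finset.univ.lcm mm = M := by
      apply Nat.dvd_antisymm (Finset.lcm_dvd fun i _ => hmmM i)
      have h1 : Q ∣ p ^ E * Finset.univ.lcm mm := by
        rw [← hQ]
        apply Finset.lcm_dvd
        intro i _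
        rw [← hfact i]
        exact mul_dvd_mul (pow_dvd_pow p (hei i)) (Finset.dvd_lcm (Finset.mem_univ i))
      rw [← hQPM] at h1
      exact (Nat.mul_dvd_mul_iff_left (pow_pos pp.pos E)).mp h1
    have hlcmP : Finset.univ.lcm P = p ^ E := by
      apply Nat.dvd_antisymm (Finset.lcm_dvd fun i _ => pow_dvd_pow p (hei i))
      have h1 : Q ∣ Finset.univ.lcm P * M := by
        rw [← hQ]
        apply Finset.lcm_dvd
        intro i _
        rw [← hfact i]
        exact mul_dvd_mul (Finset.dvd_lcm (Finset.mem_univ i)) (hmmM i)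
      rw [← hQPM] at h1
      exact (Nat.mul_dvd_mul_iff_right hM0).mp h1
    have hMlt : M < Q := by
      have h2 : 2 ≤ p ^ E := le_trans pp.two_le (Nat.le_self_pow (by omega) p)
      have h3 : 2 * M ≤ Q := by
        rw [← hQPM]
        exact Nat.mul_le_mul_right M h2
      omega
    have hCO : (∏ i, P i).Coprime (∏ i, mm i) := by
      have h1 : p.Coprime (∏ i, mm i) := Nat.Coprime.prod_right fun i _ => hcopm i
      have h2 : ∏ i, P i = p ^ (∑ i, e i) := Finset.prod_pow_eq_pow_sum _ _ _
      rw [h2]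
      exact h1.pow_left _
    -- rewrite moduli in product form
    have hqss : q = fun i => P i * mm i := funext fun i => (hfact i).symm
    rw [hqss]
    unfold Ineq
    have hlcmq : (Finset.univ.lcm fun i => P i * mm i) = Q := by rw [← hqss]; exact hQ
    rw [hlcmq]
    rw [sumk_split P mm hP0 hm0 hcoi hCO G hG, Finset.sum_product_right]
    -- inner bound from prime-power case
    set GS : ((i : Fin k) → ℕ) → Fin k → ℝ → ℂ :=
      fun c i x => G i (x + (c i : ℝ) / (mm i : ℝ)) with hGS
    have hinner : ∀ c ∈ Sset k mm,
        ‖∑ b ∈ Sset k P, ∏ i, G i ((b i : ℝ) / (P i : ℝ) + (c i : ℝ) / (mm i : ℝ))‖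
          ≤ ((p ^ E : ℕ) : ℝ)⁻¹ * ∏ i, Real.sqrt ((P i : ℝ) * Wq (P i) (GS c i)) := by
      intro c _
      have h1 : Ineq k P (GS c) := lemLP hk p pp e (GS c)
      unfold Ineq at h1
      rw [hlcmP] at h1
      exact h1
    have habs1 : ‖∑ c ∈ Sset k mm, ∑ b ∈ Sset k P,
          ∏ i, G i ((b i : ℝ) / (P i : ℝ) + (c i : ℝ) / (mm i : ℝ))‖
        ≤ ∑ c ∈ Sset k mm, ((p ^ E : ℕ) : ℝ)⁻¹ *
            ∏ i, Real.sqrt ((P i : ℝ) * Wq (P i) (GS c i)) :=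
      (norm_sum_le _ _).trans (Finset.sum_le_sum hinner)
    set s : ℝ := ∑ c ∈ Sset k mm, ∏ i, Real.sqrt (Wq (P i) (GS c i)) with hs
    have hprodsplit : ∀ c : (i : Fin k) → ℕ,
        (∏ i, Real.sqrt ((P i : ℝ) * Wq (P i) (GS c i)))
          = (∏ i, Real.sqrt (P i : ℝ)) * ∏ i, Real.sqrt (Wq (P i) (GS c i)) := by
      intro c
      rw [← Finset.prod_mul_distrib]
      exact Finset.prod_congr rfl fun i _ => Real.sqrt_mul (by positivity) _
    have habs2 : ∑ c ∈ Sset k mm, ((p ^ E : ℕ) : ℝ)⁻¹ *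
          ∏ i, Real.sqrt ((P i : ℝ) * Wq (P i) (GS c i))
        = ((p ^ E : ℕ) : ℝ)⁻¹ * ((∏ i, Real.sqrt (P i : ℝ)) * s) := by
      rw [← Finset.mul_sum]
      congr 1
      rw [Finset.sum_congr rfl fun c _ => hprodsplit c, ← Finset.mul_sum, ← hs]
    -- outer application of induction hypothesis
    set H : Fin k → ℝ → ℂ := fun i x =>
      ((Real.sqrt (∑ b ∈ CI (P i), ‖G i ((b : ℝ) / (P i : ℝ) + x)‖ ^ 2) : ℝ) : ℂ)
      with hH
    have hHper : ∀ i x, H i (x + 1) = H i x := by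
      intro i x
      rw [hH]
      dsimp only
      congr 2
      apply Finset.sum_congr rfl
      intro b _
      rw [show (b : ℝ) / (P i : ℝ) + (x + 1) = ((b : ℝ) / (P i : ℝ) + x) + 1 by ring, hG i]
    have hIH : Ineq k mm H := IH M hMlt k hk mm hm0 H hHper hlcmmm
    unfold Ineq at hIH
    rw [hlcmmm] at hIH
    have hHval : ∀ c : (i : Fin k) → ℕ,
        (∏ i, H i ((c i : ℝ) / (mm i : ℝ)))
          = (((∏ i, Real.sqrt (Wq (P i) (GS c i)) : ℝ)) : ℂ) := by
      intro c
      rw [Complex.ofReal_prod]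
      exact Finset.prod_congr rfl fun i _ => rfl
    have hsle : s ≤ ((M : ℕ) : ℝ)⁻¹ * ∏ i, Real.sqrt ((mm i : ℝ) * Wq (mm i) (H i)) := by
      have h0 : 0 ≤ s := Finset.sum_nonneg fun c _ =>
        Finset.prod_nonneg fun i _ => Real.sqrt_nonneg _
      have hq1 : ((s : ℝ) : ℂ) = ∑ c ∈ Sset k mm, ∏ i, H i ((c i : ℝ) / (mm i : ℝ)) := by
        rw [hs, Complex.ofReal_sum]
        exact Finset.sum_congr rfl fun c _ => (hHval c).symm
      calc s = ‖((s : ℝ) : ℂ)‖ := by rw [Complex.norm_real, Real.norm_eq_abs, abs_of_nonneg h0]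
        _ = ‖∑ c ∈ Sset k mm, ∏ i, H i ((c i : ℝ) / (mm i : ℝ))‖ := by rw [hq1]
        _ ≤ _ := hIH
    have hWfinal : ∀ i, Wq (mm i) (H i) = Wq (P i * mm i) (G i) := by
      intro i
      have h1 : Wq (mm i) (H i) = ∑ d ∈ CI (mm i), ∑ b ∈ CI (P i),
          ‖G i ((b : ℝ) / (P i : ℝ) + (d : ℝ) / (mm i : ℝ))‖ ^ 2 := by
        unfold Wq
        apply Finset.sum_congr rfl
        intro d _
        rw [hH]
        dsimp only
        rw [Complex.norm_real, Real.norm_eq_abs, abs_of_nonneg (Real.sqrt_nonneg _), Real.sq_sqrt]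
        exact Finset.sum_nonneg fun b _ => sq_nonneg _
      have hF : ∀ x : ℝ, ‖G i (x + 1)‖ ^ 2 = ‖G i x‖ ^ 2 :=
        fun x => by rw [hG i x]
      have h2 := sum1_split (hP0 i) (hm0 i) (hcoi i)
        (fun x => ‖G i x‖ ^ 2) hF
      rw [Finset.sum_product_right] at h2
      rw [h1]
      unfold Wq
      exact h2.symm
    -- final assembly
    calc ‖∑ c ∈ Sset k mm, ∑ b ∈ Sset k P,
          ∏ i, G i ((b i : ℝ) / (P i : ℝ) + (c i : ℝ) / (mm i : ℝ))‖
        ≤ ((p ^ E : ℕ) : ℝ)⁻¹ * ((∏ i, Real.sqrt (P i : ℝ)) * s) := by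
          rw [← habs2]; exact habs1
      _ ≤ ((p ^ E : ℕ) : ℝ)⁻¹ * ((∏ i, Real.sqrt (P i : ℝ)) *
            (((M : ℕ) : ℝ)⁻¹ * ∏ i, Real.sqrt ((mm i : ℝ) * Wq (mm i) (H i)))) := by
          apply mul_le_mul_of_nonneg_left ?_ (by positivity)
          apply mul_le_mul_of_nonneg_left hsle
          exact Finset.prod_nonneg fun i _ => Real.sqrt_nonneg _
      _ = ((Q : ℕ) : ℝ)⁻¹ *
            ∏ i, Real.sqrt (((P i * mm i : ℕ) : ℝ) * Wq (P i * mm i) (G i)) := by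
          have e1 : ∏ i, Real.sqrt ((mm i : ℝ) * Wq (mm i) (H i))
              = ∏ i, Real.sqrt ((mm i : ℝ) * Wq (P i * mm i) (G i)) :=
            Finset.prod_congr rfl fun i _ => by rw [hWfinal i]
          rw [e1]
          have e2 : (∏ i, Real.sqrt (P i : ℝ)) *
                (∏ i, Real.sqrt ((mm i : ℝ) * Wq (P i * mm i) (G i)))
              = ∏ i, Real.sqrt (((P i * mm i : ℕ) : ℝ) * Wq (P i * mm i) (G i)) := by
            rw [← Finset.prod_mul_distrib]
            apply Finset.prod_congr rfl
            intro i _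
            rw [← Real.sqrt_mul (by positivity)]
            congr 1
            push_cast
            ring
          have e3 : ((Q : ℕ) : ℝ) = ((p ^ E : ℕ) : ℝ) * ((M : ℕ) : ℝ) := by
            rw [← hQPM]; push_cast; ring
          rw [← mul_assoc, ← e2, e3, mul_inv]
          ring
end MV7

open scoped Classical in
/-- Montgomery–Vaughan basic inequality. -/
theorem statement7 (k : ℕ) (hk : 2 ≤ k) (q : Fin k → ℕ) (hq : ∀ i, 0 < q i)
    (G : Fin k → ℝ → ℂ) (hG : ∀ i x, G i (x + 1) = G i x) :
    ‖(∑ a ∈ (Fintype.piFinset fun i => Finset.Icc 1 (q i)).filter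
        (fun a : (i : Fin k) → ℕ =>
          (∀ i, Nat.Coprime (a i) (q i)) ∧ ∃ m : ℤ, (∑ i, (a i : ℚ) / (q i : ℚ)) = (m : ℚ)),
        ∏ i, G i ((a i : ℝ) / (q i : ℝ)))‖
      ≤ ((((Finset.univ : Finset (Fin k)).lcm q : ℕ) : ℝ))⁻¹ *
          ∏ i, Real.sqrt ((q i : ℝ) *
            ∑ b ∈ (Finset.Icc 1 (q i)).filter (fun b => Nat.Coprime b (q i)),
              ‖G i ((b : ℝ) / (q i : ℝ))‖ ^ 2) := by
  have h := MV7.mainInd (Finset.univ.lcm q) k hk q hq G hG rfl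
  unfold MV7.Ineq MV7.Wq MV7.Sset MV7.CI at h
  exact h
end

section
/- For a prime p \equiv 3 mod 4 and a finite set D of integers with |D| = k and all elements smaller than p, the local density \delta_D(p) := lim_{\alpha \to \infty} p^{-\alpha} #\{0 \le a < p^\alpha : a + d is a sum of two squares mod p^\alpha for all d \in D\} satisfies \delta_D(p) = (1 + 1/p)^{-1}(1 - (k-1)/p) when the elements of D are pairwise incongruent mod p, i.e. \delta_D(p)/\delta_{\{0\}}(p)^k = (1+1/p)^{k-1}(1 - (k-1)/p). -/
open scoped Classical

def IsRep (p α : ℕ) (n : ℤ) : Prop := ∃ x y : ℤ, (p:ℤ)^α ∣ n - (x^2+y^2)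

lemma rep_congr {p α : ℕ} {n n' : ℤ} (h : (p:ℤ)^α ∣ n - n') :
    IsRep p α n ↔ IsRep p α n' := by
  constructor
  · rintro ⟨x, y, hxy⟩
    refine ⟨x, y, ?_⟩
    have := dvd_sub hxy h
    rwa [show n - (x^2+y^2) - (n - n') = n' - (x^2+y^2) by ring] at this
  · rintro ⟨x, y, hxy⟩
    refine ⟨x, y, ?_⟩
    have := dvd_add hxy h
    rwa [show n' - (x^2+y^2) + (n - n') = n - (x^2+y^2) by ring] at this

lemma rep_zero {p α : ℕ} {n : ℤ} (h : (p:ℤ)^α ∣ n) : IsRep p α n :=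
  ⟨0, 0, by simpa using h⟩

lemma exists_unit_sq {p : ℕ} (hp : p.Prime) (n : ℤ) (hn : ¬ (p:ℤ) ∣ n) :
    ∃ x y : ℤ, ¬ (p:ℤ) ∣ x ∧ (p:ℤ) ∣ n - (x^2+y^2) := by
  haveI : Fact p.Prime := ⟨hp⟩
  obtain ⟨x, y, hxy⟩ := ZMod.sq_add_sq p ((n : ZMod p))
  have hne : ¬ (x = 0 ∧ y = 0) := by
    rintro ⟨rfl, rfl⟩
    simp at hxy
    exact hn ((ZMod.intCast_zmod_eq_zero_iff_dvd n p).mp hxy.symm)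
  have key : ∀ a b : ZMod p, a ^ 2 + b ^ 2 = (n : ZMod p) → a ≠ 0 →
      ∃ x y : ℤ, ¬ (p:ℤ) ∣ x ∧ (p:ℤ) ∣ n - (x^2+y^2) := by
    intro a b hab ha
    refine ⟨(a.val : ℤ), (b.val : ℤ), ?_, ?_⟩
    · rw [Int.natCast_dvd_natCast]
      intro h
      have hv : a.val = 0 := Nat.eq_zero_of_dvd_of_lt h (ZMod.val_lt a)
      exact ha ((ZMod.val_eq_zero a).mp hv)
    · rw [← ZMod.intCast_zmod_eq_zero_iff_dvd]
      push_cast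
      simp [ZMod.natCast_val, ZMod.cast_id, hab]
  by_cases hx : x = 0
  · have hy : y ≠ 0 := fun hy => hne ⟨hx, hy⟩
    exact key y x (by rw [← hxy, hx]; ring) hy
  · exact key x y hxy hx

lemma pne2 {p : ℕ} (hp4 : p % 4 = 3) : p ≠ 2 := by omega

lemma sq_lift {p : ℕ} (hp : p.Prime) (hp2 : p ≠ 2) {α : ℕ} (hα : 1 ≤ α) (t x : ℤ)
    (hx : ¬ (p:ℤ) ∣ x) (h : (p:ℤ)^α ∣ t - x^2) :
    ∃ x' : ℤ, ¬ (p:ℤ) ∣ x' ∧ (p:ℤ)^(α+1) ∣ t - x'^2 := by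
  haveI : Fact p.Prime := ⟨hp⟩
  obtain ⟨s, hs⟩ := h
  have h2x : ¬ (p:ℤ) ∣ 2 * x := by
    rw [(Nat.prime_iff_prime_int.mp hp).dvd_mul]
    push_neg
    refine ⟨fun hd => ?_, hx⟩
    have h2 : p ∣ 2 := by exact_mod_cast hd
    exact hp2 (by have := Nat.le_of_dvd two_pos h2; have := hp.two_le; omega)
  have hu : ((2 * x : ℤ) : ZMod p) ≠ 0 := by
    rwa [Ne, ZMod.intCast_zmod_eq_zero_iff_dvd]
  obtain ⟨c, hc⟩ : ∃ c : ℤ, (p:ℤ) ∣ s - 2 * x * c := by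
    refine ⟨((((s : ZMod p)) * ((2 * x : ℤ) : ZMod p)⁻¹).val : ℤ), ?_⟩
    rw [← ZMod.intCast_zmod_eq_zero_iff_dvd]
    push_cast
    rw [ZMod.natCast_val, ZMod.cast_id]
    rw [show (2:ZMod p) * (x:ZMod p) * ((s:ZMod p) * ((2:ZMod p) * (x:ZMod p))⁻¹)
        = (s:ZMod p) * ((2*(x:ZMod p)) * ((2:ZMod p)*(x:ZMod p))⁻¹) by ring,
      mul_inv_cancel₀ (by push_cast at hu; exact hu), mul_one, sub_self]
  refine ⟨x + c * (p:ℤ)^α, ?_, ?_⟩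
  · intro hd
    apply hx
    have h1 : (p:ℤ) ∣ c * (p:ℤ)^α := Dvd.dvd.mul_left (dvd_pow_self _ (by omega)) c
    have := dvd_sub hd h1
    simpa using this
  · have expand : t - (x + c * (p:ℤ)^α)^2
        = (p:ℤ)^α * (s - 2*x*c) - c^2 * ((p:ℤ)^α)^2 := by
      linear_combination hs
    rw [expand]
    apply dvd_sub
    · rw [pow_succ]
      exact mul_dvd_mul dvd_rfl hc
    · have : (p:ℤ)^(α+1) ∣ ((p:ℤ)^α)^2 := by
        rw [← pow_mul]
        exact pow_dvd_pow _ (by omega)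
      exact Dvd.dvd.mul_left this _

lemma unit_rep {p : ℕ} (hp : p.Prime) (hp2 : p ≠ 2) {α : ℕ} (hα : 1 ≤ α) (n : ℤ)
    (hn : ¬ (p:ℤ) ∣ n) : ∃ x y : ℤ, ¬ (p:ℤ) ∣ x ∧ (p:ℤ)^α ∣ n - (x^2+y^2) := by
  induction α, hα using Nat.le_induction with
  | base =>
    obtain ⟨x, y, hx, h⟩ := exists_unit_sq hp n hn
    exact ⟨x, y, hx, by simpa using h⟩
  | succ α hα ih =>
    obtain ⟨x, y, hx, h⟩ := ih
    have h' : (p:ℤ)^α ∣ (n - y^2) - x^2 := by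
      rwa [show (n - y^2) - x^2 = n - (x^2+y^2) by ring]
    obtain ⟨x', hx', h''⟩ := sq_lift hp hp2 hα (n - y^2) x hx h'
    exact ⟨x', y, hx', by rwa [show n - (x'^2+y^2) = (n - y^2) - x'^2 by ring]⟩

lemma not_rep_dvd {p : ℕ} (hp : p.Prime) (hp2 : p ≠ 2) {α : ℕ} (hα : 1 ≤ α) {n : ℤ}
    (h : ¬ IsRep p α n) : (p:ℤ) ∣ n := by
  by_contra hn
  obtain ⟨x, y, _, hd⟩ := unit_rep hp hp2 hα n hn
  exact h ⟨x, y, hd⟩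

lemma dvd_of_dvd_sq_add_sq {p : ℕ} (hp : p.Prime) (hp4 : p % 4 = 3) {x y : ℤ}
    (h : (p:ℤ) ∣ x^2 + y^2) : (p:ℤ) ∣ x ∧ (p:ℤ) ∣ y := by
  haveI : Fact p.Prime := ⟨hp⟩
  have h0 : ((x:ZMod p))^2 + ((y:ZMod p))^2 = 0 := by
    have := (ZMod.intCast_zmod_eq_zero_iff_dvd _ p).mpr h
    push_cast at this
    exact this
  have hy : (y : ZMod p) = 0 := by
    by_contra hy
    have hx2 : (x:ZMod p)^2 = -((y:ZMod p)^2) := by linear_combination h0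
    have : ((x : ZMod p) * (y : ZMod p)⁻¹)^2 = -1 := by
      rw [mul_pow, hx2, show -((y:ZMod p)^2) * ((y:ZMod p)⁻¹)^2
        = -(((y:ZMod p) * (y:ZMod p)⁻¹)^2) by ring, mul_inv_cancel₀ hy]
      ring
    exact (ZMod.exists_sq_eq_neg_one_iff (p := p)).mp ⟨(x : ZMod p) * (y : ZMod p)⁻¹, by rw [← this]; ring⟩ hp4
  have hx : (x : ZMod p) = 0 := by
    rw [hy] at h0
    simpa [pow_eq_zero_iff] using h0
  exact ⟨(ZMod.intCast_zmod_eq_zero_iff_dvd _ p).mp hx,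
    (ZMod.intCast_zmod_eq_zero_iff_dvd _ p).mp hy⟩

lemma odd_not_rep {p : ℕ} (hp : p.Prime) (hp4 : p % 4 = 3) :
    ∀ m : ℕ, ∀ α : ℕ, ∀ u : ℤ, 2*m+1 < α → ¬ (p:ℤ) ∣ u →
      ¬ IsRep p α ((p:ℤ)^(2*m+1) * u) := by
  have hP : (p:ℤ) ≠ 0 := by exact_mod_cast hp.ne_zero
  intro m
  induction m with
  | zero =>
    rintro α u hlt hu ⟨x, y, h⟩
    have hps : (p:ℤ) ∣ x^2 + y^2 := by
      have h1 : (p:ℤ) ∣ (p:ℤ)^(2*0+1) * u - (x^2+y^2) :=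
        dvd_trans (dvd_pow_self _ (by omega)) h
      have h2 : (p:ℤ) ∣ (p:ℤ)^(2*0+1) * u := by
        simpa using Dvd.dvd.mul_right dvd_rfl u
      simpa using dvd_sub h2 h1
    obtain ⟨hx, hy⟩ := dvd_of_dvd_sq_add_sq hp hp4 hps
    obtain ⟨x', rfl⟩ := hx
    obtain ⟨y', rfl⟩ := hy
    have h2 : ((p:ℤ))^2 ∣ (p:ℤ)^(2*0+1) * u := by
      have hd : ((p:ℤ))^2 ∣ ((p:ℤ)*x')^2 + ((p:ℤ)*y')^2 := ⟨x'^2 + y'^2, by ring⟩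
      have hα2 : ((p:ℤ))^2 ∣ (p:ℤ)^α := pow_dvd_pow _ (by omega)
      have := dvd_add (dvd_trans hα2 h) hd
      simpa using this
    apply hu
    have : (p:ℤ) * (p:ℤ) ∣ (p:ℤ) * u := by
      rw [← sq]
      simpa using h2
    exact (mul_dvd_mul_iff_left hP).mp this
  | succ m ih =>
    rintro α u hlt hu ⟨x, y, h⟩
    have hps : (p:ℤ) ∣ x^2 + y^2 := by
      have h1 : (p:ℤ) ∣ (p:ℤ)^(2*(m+1)+1) * u - (x^2+y^2) :=
        dvd_trans (dvd_pow_self _ (by omega)) h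
      have h2 : (p:ℤ) ∣ (p:ℤ)^(2*(m+1)+1) * u :=
        Dvd.dvd.mul_right (dvd_pow_self _ (by omega)) u
      simpa using dvd_sub h2 h1
    obtain ⟨hx, hy⟩ := dvd_of_dvd_sq_add_sq hp hp4 hps
    obtain ⟨x', rfl⟩ := hx
    obtain ⟨y', rfl⟩ := hy
    apply ih (α - 2) u (by omega) hu
    refine ⟨x', y', ?_⟩
    have key : (p:ℤ)^2 * ((p:ℤ)^(α-2)) ∣ (p:ℤ)^2 * ((p:ℤ)^(2*m+1) * u - (x'^2+y'^2)) := by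
      rw [← pow_add]
      have : 2 + (α - 2) = α := by omega
      rw [this]
      convert h using 1
      ring
    exact (mul_dvd_mul_iff_left (pow_ne_zero 2 hP)).mp key

lemma even_rep {p : ℕ} (hp : p.Prime) (hp4 : p % 4 = 3) {α j : ℕ} (u : ℤ)
    (hu : ¬ (p:ℤ) ∣ u) : IsRep p α ((p:ℤ)^(2*j) * u) := by
  by_cases hle : α ≤ 2*j
  · exact rep_zero (Dvd.dvd.mul_right (pow_dvd_pow _ hle) u)
  · have h1 : 1 ≤ α - 2*j := by omega
    obtain ⟨x, y, _, hd⟩ := unit_rep hp (pne2 hp4) h1 u hu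
    refine ⟨(p:ℤ)^j * x, (p:ℤ)^j * y, ?_⟩
    have key : (p:ℤ)^(2*j) * ((p:ℤ)^(α - 2*j)) ∣
        (p:ℤ)^(2*j) * (u - (x^2+y^2)) := mul_dvd_mul_left _ hd
    rw [← pow_add] at key
    have h2 : 2*j + (α - 2*j) = α := by omega
    rw [h2] at key
    convert key using 1
    ring

lemma val_decomp {p : ℕ} (hp : p.Prime) :
    ∀ α : ℕ, ∀ s : ℤ, ¬ (p:ℤ)^α ∣ s → ∃ e : ℕ, e < α ∧ ∃ u : ℤ, ¬ (p:ℤ) ∣ u ∧ s = (p:ℤ)^e * u := by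
  intro α
  induction α with
  | zero => intro s hs; exact absurd (by simpa using (one_dvd s)) hs
  | succ α ih =>
    intro s hs
    by_cases hps : (p:ℤ) ∣ s
    · obtain ⟨s', rfl⟩ := hps
      have hs' : ¬ (p:ℤ)^α ∣ s' := by
        intro hd
        exact hs (by rw [pow_succ, mul_comm ((p:ℤ)^α)]; exact mul_dvd_mul_left _ hd)
      obtain ⟨e, he, u, hu, rfl⟩ := ih s' hs'
      exact ⟨e+1, by omega, u, hu, by ring⟩
    · exact ⟨0, by omega, s, hps, by ring⟩

lemma key_iff {p : ℕ} (hp : p.Prime) (hp4 : p % 4 = 3) {α : ℕ} (hα : 1 ≤ α) (s : ℤ) :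
    IsRep p (α+1) ((p:ℤ) * s) ↔ ((p:ℤ)^α ∣ s ∨ ¬ IsRep p α s) := by
  constructor
  · intro h
    by_contra hcon
    push_neg at hcon
    obtain ⟨h1, h2⟩ := hcon
    obtain ⟨e, he, u, hu, rfl⟩ := val_decomp hp α _ h1
    rcases Nat.even_or_odd e with ⟨j, rfl⟩ | ⟨j, rfl⟩
    · -- e = 2j even: p*s has odd valuation 2j+1 < α+1, contradiction with h
      apply odd_not_rep hp hp4 j (α+1) u (by omega) hu
      have : (p:ℤ) * ((p:ℤ)^(j+j) * u) = (p:ℤ)^(2*j+1) * u := by ring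
      rwa [this] at h
    · -- e = 2j+1 odd: s not rep, contradiction with h2
      exact odd_not_rep hp hp4 j α u (by omega) hu h2
  · rintro (h | h)
    · exact rep_zero (by rw [pow_succ, mul_comm]; exact mul_dvd_mul_left _ h)
    · have h1 : ¬ (p:ℤ)^α ∣ s := fun hd => h (rep_zero hd)
      obtain ⟨e, he, u, hu, rfl⟩ := val_decomp hp α _ h1
      rcases Nat.even_or_odd e with ⟨j, rfl⟩ | ⟨j, rfl⟩
      · exact absurd (by simpa [show j+j = 2*j by ring] using even_rep hp hp4 (α := α) (j := j) u hu) h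
      · have : (p:ℤ) * ((p:ℤ)^(2*j+1) * u) = (p:ℤ)^(2*(j+1)) * u := by ring
        rw [this]
        exact even_rep hp hp4 u hu

noncomputable def Bcount (p α : ℕ) : ℕ :=
  ((Finset.range (p^α)).filter (fun r : ℕ => ¬ IsRep p α (r : ℤ))).card

-- shift invariance

lemma shift_card {p : ℕ} (hp : p.Prime) (α : ℕ) (d : ℤ) :
    ((Finset.range (p^α)).filter (fun a : ℕ => ¬ IsRep p α ((a:ℤ) + d))).card
      = Bcount p α := by
  have hp0 : (0:ℤ) < (p:ℤ) := by exact_mod_cast hp.pos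
  have hm : (0:ℤ) < (p:ℤ)^α := pow_pos hp0 α
  have hmn : ((p^α : ℕ) : ℤ) = (p:ℤ)^α := by push_cast; ring
  unfold Bcount
  refine Finset.card_bij' (fun (a : ℕ) (_ : a ∈ _) => (((a:ℤ) + d) % (p:ℤ)^α).toNat)
    (fun (r : ℕ) (_ : r ∈ _) => (((r:ℤ) - d) % (p:ℤ)^α).toNat) ?_ ?_ ?_ ?_
  · intro a ha
    beta_reduce
    rw [Finset.mem_filter] at ha ⊢
    obtain ⟨har, hrep⟩ := ha
    have h0 : 0 ≤ ((a:ℤ) + d) % (p:ℤ)^α := Int.emod_nonneg _ hm.ne'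
    have h1 : ((a:ℤ) + d) % (p:ℤ)^α < (p:ℤ)^α := Int.emod_lt_of_pos _ hm
    constructor
    · rw [Finset.mem_range]
      omega
    · rw [Int.toNat_of_nonneg h0]
      intro hr
      apply hrep
      rwa [rep_congr (n := (a:ℤ)+d) (n' := ((a:ℤ) + d) % (p:ℤ)^α)
        ⟨((a:ℤ)+d) / (p:ℤ)^α, by rw [Int.emod_def]; ring⟩]
  · intro r hr
    beta_reduce
    rw [Finset.mem_filter] at hr ⊢
    obtain ⟨hrr, hrep⟩ := hr
    have h0 : 0 ≤ ((r:ℤ) - d) % (p:ℤ)^α := Int.emod_nonneg _ hm.ne'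
    have h1 : ((r:ℤ) - d) % (p:ℤ)^α < (p:ℤ)^α := Int.emod_lt_of_pos _ hm
    constructor
    · rw [Finset.mem_range]; omega
    · intro hrep2
      apply hrep
      have hd : (p:ℤ)^α ∣ ((((r:ℤ) - d) % (p:ℤ)^α).toNat + d) - (r:ℤ) := by
        rw [Int.toNat_of_nonneg h0, Int.emod_def]
        exact ⟨-(((r:ℤ)-d) / (p:ℤ)^α), by ring⟩
      rwa [← rep_congr hd]
  · intro a ha
    beta_reduce
    rw [Finset.mem_filter, Finset.mem_range] at ha
    have h0 : 0 ≤ ((a:ℤ) + d) % (p:ℤ)^α := Int.emod_nonneg _ hm.ne'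
    have key : ((((a:ℤ) + d) % (p:ℤ)^α).toNat - d) % (p:ℤ)^α = (a:ℤ) := by
      rw [Int.toNat_of_nonneg h0]
      have : (((a:ℤ) + d) % (p:ℤ)^α - d) % (p:ℤ)^α = ((a:ℤ) + d - d) % (p:ℤ)^α := by
        rw [Int.sub_emod (((a:ℤ) + d) % ((p:ℤ)^α)) d, Int.sub_emod ((a:ℤ)+d) d,
          Int.emod_emod_of_dvd _ dvd_rfl]
      rw [this, add_sub_cancel_right]
      refine Int.emod_eq_of_lt (by positivity) ?_
      rw [← hmn]
      exact_mod_cast ha.1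
    rw [key]
    simp
  · intro r hr
    beta_reduce
    rw [Finset.mem_filter, Finset.mem_range] at hr
    have h0 : 0 ≤ ((r:ℤ) - d) % (p:ℤ)^α := Int.emod_nonneg _ hm.ne'
    have key : ((((r:ℤ) - d) % (p:ℤ)^α).toNat + d) % (p:ℤ)^α = (r:ℤ) := by
      rw [Int.toNat_of_nonneg h0]
      have : (((r:ℤ) - d) % (p:ℤ)^α + d) % (p:ℤ)^α = ((r:ℤ) - d + d) % (p:ℤ)^α := by
        rw [Int.add_emod (((r:ℤ) - d) % ((p:ℤ)^α)) d, Int.add_emod ((r:ℤ)-d) d,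
          Int.emod_emod_of_dvd _ dvd_rfl]
      rw [this, sub_add_cancel]
      refine Int.emod_eq_of_lt (by positivity) ?_
      rw [← hmn]
      exact_mod_cast hr.1
    rw [key]
    simp

lemma bcount_rec {p : ℕ} (hp : p.Prime) (hp4 : p % 4 = 3) {α : ℕ} (hα : 1 ≤ α) :
    Bcount p (α+1) + Bcount p α + 1 = p^α := by
  have hp0 : 0 < p := hp.pos
  -- the non-representables mod p^(α+1) are exactly p * s for s "nonzero representable" mod p^α
  have himg : (Finset.range (p^(α+1))).filter (fun r : ℕ => ¬ IsRep p (α+1) (r : ℤ))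
      = ((Finset.range (p^α)).filter (fun s : ℕ => s ≠ 0 ∧ IsRep p α (s : ℤ))).image
          (fun s => p * s) := by
    ext r
    simp only [Finset.mem_filter, Finset.mem_range, Finset.mem_image]
    constructor
    · rintro ⟨hr, hrep⟩
      have hdvd : (p:ℤ) ∣ (r:ℤ) := not_rep_dvd hp (pne2 hp4) (by omega) hrep
      have hdvd' : p ∣ r := by exact_mod_cast hdvd
      obtain ⟨s, rfl⟩ := hdvd'
      have hs : s < p^α := by
        rw [pow_succ, mul_comm (p^α) p] at hr
        exact lt_of_mul_lt_mul_left hr (by omega)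
      have hkey : ¬ ((p:ℤ)^α ∣ (s:ℤ) ∨ ¬ IsRep p α (s:ℤ)) := by
        rw [← key_iff hp hp4 hα]
        intro hcon
        exact hrep (by push_cast at hcon ⊢; exact hcon)
      push_neg at hkey
      obtain ⟨h1, h2⟩ := hkey
      refine ⟨s, ⟨hs, ?_, h2⟩, rfl⟩
      intro hs0
      exact h1 (by simp [hs0])
    · rintro ⟨s, ⟨hs, hs0, hrep⟩, rfl⟩
      refine ⟨?_, ?_⟩
      · rw [pow_succ, mul_comm (p^α) p]
        exact (Nat.mul_lt_mul_left hp0).mpr hs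
      · rw [show ((p * s : ℕ) : ℤ) = (p:ℤ) * (s:ℤ) by push_cast; ring,
          key_iff hp hp4 hα]
        push_neg
        refine ⟨?_, hrep⟩
        intro hd
        have : (p^α : ℕ) ∣ s := by exact_mod_cast (by push_cast at hd ⊢; exact hd : ((p^α : ℕ) : ℤ) ∣ (s:ℤ))
        exact hs0 (Nat.eq_zero_of_dvd_of_lt this hs)
  have hinj : Set.InjOn (fun s => p * s) ((Finset.range (p^α)).filter
      (fun s : ℕ => s ≠ 0 ∧ IsRep p α (s : ℤ))) := by
    intro a _ b _ hab
    simpa [Nat.mul_left_cancel_iff hp0] using hab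
  have hcard1 : Bcount p (α+1)
      = ((Finset.range (p^α)).filter (fun s : ℕ => s ≠ 0 ∧ IsRep p α (s : ℤ))).card := by
    rw [Bcount, himg, Finset.card_image_of_injOn hinj]
  -- now split range p^α
  have h0mem : 0 ∈ (Finset.range (p^α)).filter (fun s : ℕ => IsRep p α (s : ℤ)) := by
    rw [Finset.mem_filter, Finset.mem_range]
    exact ⟨by positivity, rep_zero (by simp)⟩
  have herase : (Finset.range (p^α)).filter (fun s : ℕ => s ≠ 0 ∧ IsRep p α (s : ℤ))
      = ((Finset.range (p^α)).filter (fun s : ℕ => IsRep p α (s : ℤ))).erase 0 := by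
    ext s
    simp only [Finset.mem_filter, Finset.mem_erase, Finset.mem_range]
    tauto
  have hcard2 : ((Finset.range (p^α)).filter (fun s : ℕ => s ≠ 0 ∧ IsRep p α (s : ℤ))).card + 1
      = ((Finset.range (p^α)).filter (fun s : ℕ => IsRep p α (s : ℤ))).card := by
    rw [herase, Finset.card_erase_of_mem h0mem]
    have : 0 < ((Finset.range (p^α)).filter (fun s : ℕ => IsRep p α (s : ℤ))).card :=
      Finset.card_pos.mpr ⟨0, h0mem⟩
    omega
  have hsplit : ((Finset.range (p^α)).filter (fun s : ℕ => IsRep p α (s : ℤ))).card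
      + Bcount p α = p^α := by
    rw [Bcount, Finset.card_filter_add_card_filter_not, Finset.card_range]
  omega

lemma bcount_one {p : ℕ} (hp : p.Prime) (hp4 : p % 4 = 3) : Bcount p 1 = 0 := by
  rw [Bcount, Finset.card_eq_zero, Finset.filter_eq_empty_iff]
  intro r hr
  rw [Finset.mem_range, pow_one] at hr
  rw [not_not]
  by_cases h0 : r = 0
  · exact rep_zero (by simp [h0])
  · have : ¬ (p:ℤ) ∣ (r:ℤ) := by
      rw [Int.natCast_dvd_natCast]
      intro hd
      exact h0 (Nat.eq_zero_of_dvd_of_lt hd hr)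
    obtain ⟨x, y, _, hd⟩ := unit_rep hp (pne2 hp4) le_rfl (r:ℤ) this
    exact ⟨x, y, by simpa using hd⟩

lemma bcount_closed {p : ℕ} (hp : p.Prime) (hp4 : p % 4 = 3) {α : ℕ} (hα : 1 ≤ α) :
    (p+1) * Bcount p α + p^(α % 2) = p^α := by
  induction α, hα using Nat.le_induction with
  | base => rw [bcount_one hp hp4]; norm_num
  | succ α hα ih =>
    have hrec := bcount_rec hp hp4 hα
    have h1 : ((Bcount p (α+1) : ℤ)) + (Bcount p α : ℤ) + 1 = (p:ℤ)^α := by exact_mod_cast hrec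
    have h2 : ((p:ℤ)+1) * (Bcount p α : ℤ) + (p:ℤ)^(α % 2) = (p:ℤ)^α := by exact_mod_cast ih
    have goal : ((p:ℤ)+1) * (Bcount p (α+1) : ℤ) + (p:ℤ)^((α+1) % 2) = (p:ℤ)^(α+1) := by
      rcases Nat.even_or_odd α with he | ho
      · have e1 : α % 2 = 0 := Nat.even_iff.mp he
        have e2 : (α+1) % 2 = 1 := by omega
        rw [e1] at h2; rw [e2, pow_one, pow_succ]
        linear_combination ((p:ℤ)+1) * h1 - h2
      · have e1 : α % 2 = 1 := Nat.odd_iff.mp ho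
        have e2 : (α+1) % 2 = 0 := by omega
        rw [e1, pow_one] at h2; rw [e2, pow_succ]
        linear_combination ((p:ℤ)+1) * h1 - h2
    exact_mod_cast goal

lemma main_count {p : ℕ} (hp : p.Prime) (hp4 : p % 4 = 3) (D : Finset ℤ)
    (hdist : ∀ d₁ ∈ D, ∀ d₂ ∈ D, d₁ ≠ d₂ → ¬ ((p : ℤ) ∣ d₁ - d₂))
    {α : ℕ} (hα : 1 ≤ α) :
    ((Finset.range (p^α)).filter (fun a : ℕ => ∀ d ∈ D, IsRep p α ((a:ℤ) + d))).card
      + D.card * Bcount p α = p^α := by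
  set T := D.biUnion (fun d => (Finset.range (p^α)).filter
    (fun a : ℕ => ¬ IsRep p α ((a:ℤ) + d))) with hT
  have hTsub : T ⊆ Finset.range (p^α) := by
    intro a ha
    rw [hT, Finset.mem_biUnion] at ha
    obtain ⟨d, _, hd⟩ := ha
    exact Finset.filter_subset _ _ hd
  have hS : (Finset.range (p^α)).filter (fun a : ℕ => ∀ d ∈ D, IsRep p α ((a:ℤ) + d))
      = Finset.range (p^α) \ T := by
    ext a
    simp only [hT, Finset.mem_filter, Finset.mem_sdiff, Finset.mem_biUnion]
    constructor
    · rintro ⟨h1, h2⟩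
      exact ⟨h1, fun ⟨d, hd, _, hrep⟩ => hrep (h2 d hd)⟩
    · rintro ⟨h1, h2⟩
      refine ⟨h1, fun d hd => ?_⟩
      by_contra hrep
      exact h2 ⟨d, hd, h1, hrep⟩
  have hTcard : T.card = D.card * Bcount p α := by
    rw [hT, Finset.card_biUnion]
    · rw [Finset.sum_congr rfl (fun d _ => shift_card hp α d), Finset.sum_const, smul_eq_mul]
    · intro d₁ h₁ d₂ h₂ hne
      rw [Function.onFun, Finset.disjoint_left]
      intro a ha₁ ha₂
      rw [Finset.mem_filter] at ha₁ ha₂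
      have hd₁ : (p:ℤ) ∣ (a:ℤ) + d₁ := not_rep_dvd hp (pne2 hp4) hα ha₁.2
      have hd₂ : (p:ℤ) ∣ (a:ℤ) + d₂ := not_rep_dvd hp (pne2 hp4) hα ha₂.2
      exact hdist d₁ h₁ d₂ h₂ hne (by simpa using dvd_sub hd₁ hd₂)
  rw [hS, hTcard.symm, Finset.card_sdiff_add_card_eq_card hTsub, Finset.card_range]

lemma card_filter_bind (p : ℕ) (α : ℕ) (P : ℤ → Prop) [DecidablePred P]
    [DecidablePred (fun a : ℕ => P ((a:ℕ):ℤ))] :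
    ((bind (Finset.range (p^α)) (fun a => pure ((a : ℕ) : ℤ)) : Finset ℤ).filter P).card
      = ((Finset.range (p^α)).filter (fun a : ℕ => P ((a:ℕ):ℤ))).card := by
  have hbind : (bind (Finset.range (p^α)) (fun a => pure ((a : ℕ) : ℤ)) : Finset ℤ)
      = (Finset.range (p^α)).image (fun a : ℕ => (a : ℤ)) := by
    ext b
    simp [Bind.bind, Finset.pure_def, Finset.mem_sup]
  have hinj : Function.Injective (fun a : ℕ => (a:ℤ)) := fun a b h => by simpa using h
  rw [hbind, Finset.filter_image, Finset.card_image_of_injective _ hinj]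
  congr

set_option maxHeartbeats 1000000 in
open scoped Classical in
/-- For a prime `p ≡ 3 (4)` and a set `D` of `k` integers, all smaller than `p` and
pairwise incongruent mod `p`, the local density of simultaneous sums of two squares
satisfies `δ_D(p) = (1+1/p)⁻¹ (1-(k-1)/p)`. -/
theorem statement10 (p : ℕ) (hp : p.Prime) (hp4 : p % 4 = 3)
    (D : Finset ℤ) (k : ℕ) (hk : D.card = k)
    (hlt : ∀ d ∈ D, d < (p : ℤ))
    (hdist : ∀ d₁ ∈ D, ∀ d₂ ∈ D, d₁ ≠ d₂ → ¬ ((p : ℤ) ∣ d₁ - d₂)) :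
    Filter.Tendsto
      (fun α : ℕ =>
        (((Finset.range (p ^ α)).filter
            (fun a => ∀ d ∈ D, ∃ x y : ℤ,
              (p : ℤ) ^ α ∣ (a : ℤ) + d - (x ^ 2 + y ^ 2))).card : ℝ) / (p ^ α : ℝ))
      Filter.atTop
      (nhds ((1 + 1 / (p : ℝ))⁻¹ * (1 - ((k : ℝ) - 1) / (p : ℝ)))) := by
  have hp3 : 3 ≤ p := by
    have := hp.two_le
    omega
  have hpR : (3:ℝ) ≤ (p:ℝ) := by exact_mod_cast hp3
  have hp0 : (p:ℝ) ≠ 0 := by positivity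
  have hp1 : (p:ℝ) + 1 ≠ 0 := by positivity
  set L : ℝ := (1 + 1 / (p : ℝ))⁻¹ * (1 - ((k : ℝ) - 1) / (p : ℝ)) with hL
  have h0 : Filter.Tendsto (fun α : ℕ => (p:ℝ)^(α % 2) / (p:ℝ)^α) Filter.atTop (nhds 0) := by
    apply squeeze_zero (g := fun α : ℕ => (p:ℝ) * (1/(p:ℝ))^α)
    · intro α
      positivity
    · intro α
      rw [div_eq_mul_inv, ← inv_pow, ← one_div]
      apply mul_le_mul_of_nonneg_right _ (by positivity)
      calc (p:ℝ)^(α % 2) ≤ (p:ℝ)^1 := by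
            apply pow_le_pow_right₀ (by linarith)
            omega
        _ = (p:ℝ) := pow_one _
    · have hlt1 : 1/(p:ℝ) < 1 := by
        rw [div_lt_one (by linarith)]
        linarith
      have := (tendsto_pow_atTop_nhds_zero_of_lt_one (by positivity) hlt1).const_mul (p:ℝ)
      simpa using this
  have hg : Filter.Tendsto (fun α : ℕ => L + ((k:ℝ)/((p:ℝ)+1)) * ((p:ℝ)^(α % 2) / (p:ℝ)^α))
      Filter.atTop (nhds L) := by
    have := Filter.Tendsto.add (tendsto_const_nhds (x := L))
      (Filter.Tendsto.const_mul ((k:ℝ)/((p:ℝ)+1)) h0)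
    simpa using this
  apply hg.congr'
  rw [Filter.EventuallyEq, Filter.eventually_atTop]
  refine ⟨1, fun α hα => ?_⟩
  have hpa : (p:ℝ)^α ≠ 0 := by positivity
  have hmc := main_count hp hp4 D hdist hα
  rw [hk] at hmc
  have h1 : (((Finset.range (p ^ α)).filter
      (fun a : ℕ => ∀ d ∈ D, IsRep p α ((a:ℤ) + d))).card : ℝ)
      + (k:ℝ) * (Bcount p α : ℝ) = (p:ℝ)^α := by exact_mod_cast hmc
  have h2 : ((p:ℝ)+1) * (Bcount p α : ℝ) + (p:ℝ)^(α % 2) = (p:ℝ)^α := by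
    exact_mod_cast bcount_closed hp hp4 hα
  have hfilter : ((bind (Finset.range (p^α)) (fun a => pure ((a : ℕ) : ℤ)) : Finset ℤ).filter
        (fun a : ℤ => ∀ d ∈ D, ∃ x y : ℤ, (p : ℤ) ^ α ∣ a + d - (x ^ 2 + y ^ 2))).card
      = ((Finset.range (p ^ α)).filter
        (fun a : ℕ => ∀ d ∈ D, IsRep p α ((a:ℤ) + d))).card :=
    card_filter_bind p α _
  rw [hfilter]
  have hB : (Bcount p α : ℝ) = ((p:ℝ)^α - (p:ℝ)^(α % 2))/((p:ℝ)+1) := by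
    field_simp
    linarith
  have hC : (((Finset.range (p ^ α)).filter
      (fun a : ℕ => ∀ d ∈ D, IsRep p α ((a:ℤ) + d))).card : ℝ)
      = (p:ℝ)^α - (k:ℝ) * (Bcount p α : ℝ) := by linarith
  rw [hL, hC, hB]
  field_simp
  ring
end

section
/- For a prime q \equiv 1 mod 4, a set H of integers with max element h < y, and with P_y = \prod_{p \le y, p \not\equiv 1 (4)} p, the tail of the singular series Euler product satisfies \prod_{p > y, p \not\equiv 1 (4)} \delta_H(p)/\delta_{\{0\}}(p)^{|H|} = \prod_{p > y, p \equiv 3 (4)} (1 + 1/p)^{k-1}(1 - (k-1)/p) = 1 + O_k(1/(y \log y)), where k = |H|. -/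
set_option maxHeartbeats 1000000

-- pointwise bounds
lemma auxA (m : ℕ) : ∀ x : ℝ, 0 ≤ x → x ≤ 1 →
    (1+x)^m * (1 - m*x) ≤ 1 ∧ 1 - m * 2^m * x^2 ≤ (1+x)^m * (1 - m*x) := by
  induction m with
  | zero => intro x h0 h1; norm_num
  | succ m ih =>
    intro x h0 h1
    obtain ⟨hu, hl⟩ := ih x h0 h1
    have key : (1+x)^(m+1) * (1 - (m+1:ℕ)*x)
        = (1+x)^m * (1 - m*x) - (m+1) * x^2 * (1+x)^m := by
      push_cast; ring
    have hpow : (0:ℝ) ≤ (1+x)^m := by positivity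
    have hpow2 : (1+x)^m ≤ 2^m := by
      apply pow_le_pow_left₀ (by linarith) (by linarith)
    constructor
    · rw [key]
      nlinarith [mul_nonneg (mul_nonneg (by positivity : (0:ℝ) ≤ (m:ℝ)+1) (sq_nonneg x)) hpow]
    · rw [key]
      have h2 : (m+1 : ℝ) * x^2 * (1+x)^m ≤ (m+1) * x^2 * 2^m := by
        apply mul_le_mul_of_nonneg_left hpow2 (by positivity)
      have : (1:ℝ) - m * 2^m * x^2 - (m+1) * x^2 * 2^m ≤ (1+x)^m * (1-m*x) - (m+1)*x^2*(1+x)^m := by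
        linarith
      refine le_trans ?_ this
      have hp : (0:ℝ) ≤ 2^m * x^2 := by positivity
      rw [pow_succ]
      push_cast
      nlinarith [hp]

-- Weierstrass product lower bound
lemma auxB {ι : Type*} [DecidableEq ι] (s : Finset ι) (f : ι → ℝ)
    (h0 : ∀ i ∈ s, 0 ≤ f i) (h1 : ∀ i ∈ s, f i ≤ 1) :
    1 - ∑ i ∈ s, (1 - f i) ≤ ∏ i ∈ s, f i := by
  induction s using Finset.induction_on with
  | empty => simp
  | insert _ _ hnot ih =>
    rename_i a t
    rw [Finset.prod_insert hnot, Finset.sum_insert hnot]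
    have h0a := h0 a (Finset.mem_insert_self a t)
    have h1a := h1 a (Finset.mem_insert_self a t)
    have ih' := ih (fun i hi => h0 i (Finset.mem_insert_of_mem hi))
      (fun i hi => h1 i (Finset.mem_insert_of_mem hi))
    have hsum : (0:ℝ) ≤ ∑ i ∈ t, (1 - f i) :=
      Finset.sum_nonneg fun i hi => by linarith [h1 i (Finset.mem_insert_of_mem hi)]
    nlinarith [ih']

-- telescoping over Ico
lemma auxT (F : ℕ → ℝ) (a b : ℕ) (h : a ≤ b) :
    ∑ i ∈ Finset.Ico a b, (F i - F (i+1)) = F a - F b := by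
  rw [Finset.sum_Ico_eq_sub _ h]
  rw [Finset.sum_range_sub' F, Finset.sum_range_sub' F]
  ring

-- prime counting bound via primorial
lemma auxC (y : ℝ) (hy : 2 ≤ y) (t : Finset ℕ) (ht : ∀ p ∈ t, Nat.Prime p ∧ y < p)
    (n : ℕ) (htn : ∀ p ∈ t, p ≤ n) :
    (t.card : ℝ) * Real.log y ≤ n * Real.log 4 := by
  set m : ℕ := ⌊y⌋₊ with hm
  have hm2 : 2 ≤ m := Nat.le_floor (by exact_mod_cast hy)
  have hmy : (m : ℝ) ≤ y := Nat.floor_le (by linarith)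
  have hym : y < (m:ℝ) + 1 := Nat.lt_floor_add_one y
  -- each p ∈ t satisfies m + 1 ≤ p
  have hpt : ∀ p ∈ t, m + 1 ≤ p := fun p hp => by
    have h' : (m:ℝ) < p := lt_of_le_of_lt hmy (ht p hp).2
    have : m < p := by exact_mod_cast h'
    omega
  -- (m+1)^card ≤ ∏ p ≤ primorial n ≤ 4^n
  have h1 : (m+1) ^ t.card ≤ ∏ p ∈ t, p := Finset.pow_card_le_prod t _ _ hpt
  have h2 : ∏ p ∈ t, p ≤ primorial n := by
    apply Finset.prod_le_prod_of_subset_of_one_le'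
    · intro p hp
      simp only [Finset.mem_filter, Finset.mem_range]
      exact ⟨Nat.lt_succ_of_le (htn p hp), (ht p hp).1⟩
    · intro i hi _
      simp only [Finset.mem_filter] at hi
      exact hi.2.one_lt.le
  have h3 : primorial n ≤ 4 ^ n := primorial_le_4_pow n
  have h4 : ((m:ℝ)+1) ^ t.card ≤ (4:ℝ) ^ n := by
    have := h1.trans (h2.trans h3)
    exact_mod_cast this
  have h5 : Real.log (((m:ℝ)+1) ^ t.card) ≤ Real.log ((4:ℝ)^n) :=
    Real.log_le_log (by positivity) h4
  rw [Real.log_pow, Real.log_pow] at h5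
  calc (t.card : ℝ) * Real.log y ≤ (t.card : ℝ) * Real.log ((m:ℝ)+1) := by
        apply mul_le_mul_of_nonneg_left _ (Nat.cast_nonneg _)
        exact Real.log_le_log (by linarith) (by linarith)
    _ ≤ n * Real.log 4 := h5

lemma auxD (r : ℝ) (hr : 3 ≤ r) :
    r * (1/r^2 - 1/(r+1)^2) ≤ 2 * (1/(r-1) - 1/r) := by
  have h1 : (0:ℝ) < r := by linarith
  have h2 : (0:ℝ) < r+1 := by linarith
  have h3 : (0:ℝ) < r-1 := by linarith
  have e1 : r * (1/r^2 - 1/(r+1)^2) = (2*r+1)/(r*(r+1)^2) := by field_simp; ring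
  have e2 : 2 * (1/(r-1) - 1/r) = 2/((r-1)*r) := by field_simp; ring
  rw [e1, e2, div_le_div_iff₀ (by positivity) (by positivity)]
  nlinarith

lemma auxS (y : ℝ) (hy : 2 ≤ y) (s : Finset ℕ) (hs : ∀ p ∈ s, Nat.Prime p ∧ y < p) :
    ∑ p ∈ s, (1:ℝ)/(p:ℝ)^2 ≤ 5 * Real.log 4 / (y * Real.log y) := by
  have hly : 0 < Real.log y := Real.log_pos (by linarith)
  have hl4 : 0 < Real.log 4 := Real.log_pos (by norm_num)
  rcases s.eq_empty_or_nonempty with rfl | hne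
  · simp; positivity
  set N := s.max' hne with hN
  have hNs : N ∈ s := s.max'_mem hne
  have hN3 : 3 ≤ N := by
    have h := (hs N hNs).2
    have h2 : (2:ℝ) < N := lt_of_le_of_lt hy h
    have : 2 < N := by exact_mod_cast h2
    omega
  have hple : ∀ p ∈ s, p ≤ N := fun p hp => s.le_max' p hp
  have hp3 : ∀ p ∈ s, 3 ≤ p := by
    intro p hp
    have h2 : (2:ℝ) < p := lt_of_le_of_lt hy (hs p hp).2
    have : 2 < p := by exact_mod_cast h2
    omega
  set m : ℕ := ⌊y⌋₊ with hm
  have hm2 : 2 ≤ m := Nat.le_floor (by exact_mod_cast hy)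
  have hmy : (m : ℝ) ≤ y := Nat.floor_le (by linarith)
  have hym : y < (m:ℝ) + 1 := Nat.lt_floor_add_one y
  -- the functions
  set F : ℕ → ℝ := fun n => 1/(n:ℝ)^2 with hF
  set G : ℕ → ℝ := fun n => 1/((n:ℝ)-1) with hG
  -- counting bound
  have count : ∀ n : ℕ, ((s.filter (· ≤ n)).card : ℝ) ≤ n * Real.log 4 / Real.log y := by
    intro n
    rw [le_div_iff₀ hly]
    exact auxC y hy _ (fun p hp => hs p (Finset.mem_filter.mp hp).1) n
      (fun p hp => (Finset.mem_filter.mp hp).2)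
  -- step 1: telescope each term
  have step1 : ∑ p ∈ s, F p
      = s.card • F (N+1) + ∑ p ∈ s, ∑ i ∈ Finset.Ico p (N+1), (F i - F (i+1)) := by
    have : ∀ p ∈ s, F p = F (N+1) + ∑ i ∈ Finset.Ico p (N+1), (F i - F (i+1)) := by
      intro p hp
      rw [auxT F p (N+1) (Nat.le_succ_of_le (hple p hp))]
      ring
    rw [Finset.sum_congr rfl this, Finset.sum_add_distrib, Finset.sum_const]
  -- step 2: rewrite inner sums with indicators over a common range
  have step2 : ∀ p ∈ s, ∑ i ∈ Finset.Ico p (N+1), (F i - F (i+1))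
      = ∑ i ∈ Finset.Ico 3 (N+1), (if p ≤ i then F i - F (i+1) else 0) := by
    intro p hp
    rw [← Finset.sum_filter]
    congr 1
    ext i
    simp only [Finset.mem_Ico, Finset.mem_filter]
    have := hp3 p hp
    omega
  -- step 3: swap the order of summation
  have step3 : ∑ p ∈ s, ∑ i ∈ Finset.Ico 3 (N+1), (if p ≤ i then F i - F (i+1) else 0)
      = ∑ i ∈ Finset.Ico 3 (N+1), ((s.filter (· ≤ i)).card : ℝ) * (F i - F (i+1)) := by
    rw [Finset.sum_comm]
    refine Finset.sum_congr rfl fun i _ => ?_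
    rw [← Finset.sum_filter, Finset.sum_const, nsmul_eq_mul]
  -- step 4: termwise bound
  have step4 : ∀ i ∈ Finset.Ico 3 (N+1),
      ((s.filter (· ≤ i)).card : ℝ) * (F i - F (i+1))
        ≤ (2 * Real.log 4 / Real.log y) * (if m+1 ≤ i then G i - G (i+1) else 0) := by
    intro i hi
    simp only [Finset.mem_Ico] at hi
    have hi3 : (3:ℝ) ≤ (i:ℝ) := by exact_mod_cast hi.1
    have hdpos : 0 ≤ F i - F (i+1) := by
      have h1 : (0:ℝ) < (i:ℝ) := by linarith
      have h2 : (i:ℝ) ≤ (i:ℝ)+1 := by linarith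
      simp only [hF]
      push_cast
      have : ((i:ℝ))^2 ≤ ((i:ℝ)+1)^2 := by nlinarith
      have := one_div_le_one_div_of_le (by positivity) this
      linarith
    by_cases hmi : m+1 ≤ i
    · rw [if_pos hmi]
      have hcard := count i
      have hGd : (i:ℝ) * (F i - F (i+1)) ≤ 2 * (G i - G (i+1)) := by
        have := auxD (i:ℝ) hi3
        simp only [hF, hG]
        push_cast
        convert this using 3 <;> push_cast <;> ring
      calc ((s.filter (· ≤ i)).card : ℝ) * (F i - F (i+1))
          ≤ ((i:ℝ) * Real.log 4 / Real.log y) * (F i - F (i+1)) :=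
            mul_le_mul_of_nonneg_right hcard hdpos
        _ = (Real.log 4 / Real.log y) * ((i:ℝ) * (F i - F (i+1))) := by ring
        _ ≤ (Real.log 4 / Real.log y) * (2 * (G i - G (i+1))) := by
            apply mul_le_mul_of_nonneg_left hGd (by positivity)
        _ = (2 * Real.log 4 / Real.log y) * (G i - G (i+1)) := by ring
    · rw [if_neg hmi]
      have hempty : s.filter (· ≤ i) = ∅ := by
        rw [Finset.filter_eq_empty_iff]
        intro p hp hpi
        have h1 : (p:ℝ) ≤ (i:ℝ) := by exact_mod_cast hpi
        have h2 : (i:ℝ) ≤ (m:ℝ) := by exact_mod_cast (by omega : i ≤ m)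
        have := (hs p hp).2
        linarith
      rw [hempty]
      simp
  -- step 5: the telescoped bound for the indicator sum
  have step5 : ∑ i ∈ Finset.Ico 3 (N+1), (if m+1 ≤ i then G i - G (i+1) else 0) ≤ 2 / y := by
    have he : ∑ i ∈ Finset.Ico 3 (N+1), (if m+1 ≤ i then G i - G (i+1) else 0)
        = ∑ i ∈ Finset.Ico (m+1) (N+1), (G i - G (i+1)) := by
      rw [← Finset.sum_filter]
      congr 1
      ext i
      simp only [Finset.mem_Ico, Finset.mem_filter]
      omega
    have hmN : m + 1 ≤ N + 1 := by
      have : (m:ℝ) < N := lt_of_le_of_lt hmy (hs N hNs).2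
      have : m < N := by exact_mod_cast this
      omega
    rw [he, auxT G (m+1) (N+1) hmN]
    have hG1 : G (m+1) = 1/(m:ℝ) := by simp only [hG]; push_cast; ring_nf
    have hG2 : 0 ≤ G (N+1) := by
      simp only [hG]
      push_cast
      have : (0:ℝ) < (N:ℝ) := by positivity
      rw [add_sub_cancel_right]
      positivity
    have hm1 : 1/(m:ℝ) ≤ 2/y := by
      rw [div_le_div_iff₀ (by positivity) (by linarith)]
      linarith
    rw [hG1] at *
    linarith
  -- step 6: the boundary term
  have step6 : (s.card : ℝ) * F (N+1) ≤ Real.log 4 / (y * Real.log y) := by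
    have hfull : s.filter (· ≤ N+1) = s := by
      apply Finset.filter_true_of_mem
      intro p hp; exact Nat.le_succ_of_le (hple p hp)
    have hcard : (s.card : ℝ) ≤ (N+1) * Real.log 4 / Real.log y := by
      have := count (N+1)
      rw [hfull] at this
      push_cast at this
      exact this
    have hFN : F (N+1) = 1/((N:ℝ)+1)^2 := by simp only [hF]; push_cast; ring_nf
    have hN1 : (0:ℝ) < (N:ℝ)+1 := by positivity
    have hyN : y ≤ (N:ℝ)+1 := by
      have := (hs N hNs).2
      linarith
    calc (s.card : ℝ) * F (N+1) ≤ ((N+1) * Real.log 4 / Real.log y) * F (N+1) := by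
          apply mul_le_mul_of_nonneg_right hcard
          rw [hFN]; positivity
      _ = Real.log 4 / (((N:ℝ)+1) * Real.log y) := by
          rw [hFN]; push_cast; field_simp
      _ ≤ Real.log 4 / (y * Real.log y) := by
          apply div_le_div_of_nonneg_left hl4.le (by positivity)
          apply mul_le_mul_of_nonneg_right hyN hly.le
  -- combine
  calc ∑ p ∈ s, (1:ℝ)/(p:ℝ)^2 = ∑ p ∈ s, F p := rfl
    _ = s.card • F (N+1) + ∑ p ∈ s, ∑ i ∈ Finset.Ico p (N+1), (F i - F (i+1)) := step1
    _ = (s.card : ℝ) * F (N+1)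
        + ∑ i ∈ Finset.Ico 3 (N+1), ((s.filter (· ≤ i)).card : ℝ) * (F i - F (i+1)) := by
        rw [nsmul_eq_mul, Finset.sum_congr rfl step2, step3]
    _ ≤ Real.log 4 / (y * Real.log y)
        + (2 * Real.log 4 / Real.log y) * (2 / y) := by
        have h4 := Finset.sum_le_sum step4
        rw [← Finset.mul_sum] at h4
        have h5 : (2 * Real.log 4 / Real.log y) * (∑ i ∈ Finset.Ico 3 (N+1), (if m+1 ≤ i then G i - G (i+1) else 0)) ≤ (2 * Real.log 4 / Real.log y) * (2/y) :=
          mul_le_mul_of_nonneg_left step5 (by positivity)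
        have := le_trans h4 h5
        linarith [step6]
    _ = 5 * Real.log 4 / (y * Real.log y) := by
        field_simp
        ring

/-- Tail estimate for the singular series Euler product: if for all primes
`p ≡ 3 (4)` with `p > y` the local ratio `δ p` equals `(1+1/p)^{k-1}(1-(k-1)/p)`,
then `∏_{p > y, p ≡ 3 (4)} δ p = 1 + O_k(1/(y log y))`. -/
theorem statement14 (k : ℕ) (hk : 1 ≤ k) :
    ∃ C : ℝ, ∀ y : ℝ, 2 ≤ y → ∀ δ : ℕ → ℝ,
      (∀ p : ℕ, p.Prime → p % 4 = 3 → y < (p : ℝ) →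
        δ p = (1 + 1 / (p : ℝ)) ^ (k - 1) * (1 - ((k : ℝ) - 1) / (p : ℝ))) →
      |(∏' p : {p : ℕ // p.Prime ∧ p % 4 = 3 ∧ y < (p : ℝ)}, δ p) - 1|
        ≤ C / (y * Real.log y) := by
  set m : ℕ := k - 1 with hmk
  set c : ℝ := (k:ℝ) * 2^k with hc
  have hc1 : 1 ≤ c := by
    rw [hc]
    calc (1:ℝ) = 1 * 1 := by norm_num
      _ ≤ (k:ℝ) * 2^k := by
        apply mul_le_mul (by exact_mod_cast hk) (one_le_pow₀ (by norm_num)) (by norm_num)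
          (Nat.cast_nonneg k)
  refine ⟨5 * c * Real.log 4 + (c^(k+1)+1) * (k:ℝ)^2 + 1, ?_⟩
  intro y hy δ hδ
  have hly : 0 < Real.log y := Real.log_pos (by linarith)
  have hl4 : 0 < Real.log 4 := Real.log_pos (by norm_num)
  have hyl : 0 < y * Real.log y := by positivity
  have hCpos : (0:ℝ) ≤ 5 * c * Real.log 4 + (c^(k+1)+1) * (k:ℝ)^2 + 1 := by positivity
  set S := {p : ℕ // p.Prime ∧ p % 4 = 3 ∧ y < (p : ℝ)} with hS
  set g : S → ℝ := fun p => δ p with hgdef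
  have hcast : ((k:ℝ) - 1) = (m:ℝ) := by
    rw [hmk]
    push_cast [hk]
    ring
  -- pointwise description and bounds
  have hx : ∀ p : S, 0 ≤ 1/((p:ℕ):ℝ) ∧ 1/((p:ℕ):ℝ) ≤ 1 ∧ 3 ≤ ((p:ℕ):ℝ) := by
    rintro ⟨p, hp1, hp2, hp3⟩
    have h2 : (2:ℝ) < (p:ℝ) := lt_of_le_of_lt hy hp3
    have hp0 : (0:ℝ) < p := by linarith
    refine ⟨by positivity, ?_, ?_⟩
    · rw [div_le_one hp0]; linarith
    · have : 2 < p := by exact_mod_cast h2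
      have : 3 ≤ p := this
      exact_mod_cast this
  have hgeq : ∀ p : S, g p = (1 + 1/((p:ℕ):ℝ))^m * (1 - m * (1/((p:ℕ):ℝ))) := by
    rintro ⟨p, hp1, hp2, hp3⟩
    show δ p = _
    rw [hδ p hp1 hp2 hp3, hcast, hmk]
    ring
  have hgle1 : ∀ p : S, g p ≤ 1 := by
    intro p
    rw [hgeq p]
    exact (auxA m _ (hx p).1 (hx p).2.1).1
  have hglb : ∀ p : S, 1 - g p ≤ c * (1/((p:ℕ):ℝ)^2) := by
    intro p
    rw [hgeq p]
    have h := (auxA m _ (hx p).1 (hx p).2.1).2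
    have hmc : (m:ℝ) * 2^m ≤ c := by
      rw [hc]
      apply mul_le_mul _ _ (by positivity) (Nat.cast_nonneg k)
      · exact_mod_cast Nat.sub_le k 1
      · apply pow_le_pow_right₀ (by norm_num) (Nat.sub_le k 1)
    have hx2 : (0:ℝ) ≤ (1/((p:ℕ):ℝ))^2 := by positivity
    have : (m:ℝ) * 2^m * (1/((p:ℕ):ℝ))^2 ≤ c * (1/((p:ℕ):ℝ))^2 :=
      mul_le_mul_of_nonneg_right hmc hx2
    have hpow : (1/((p:ℕ):ℝ))^2 = 1/((p:ℕ):ℝ)^2 := by rw [div_pow]; norm_num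
    rw [hpow] at this
    nlinarith [h]
  -- sum bound over any finset
  have hsum : ∀ s : Finset S, ∑ p ∈ s, (1 - g p) ≤ c * (5 * Real.log 4 / (y * Real.log y)) := by
    intro s
    have h1 : ∑ p ∈ s, (1 - g p) ≤ ∑ p ∈ s, c * (1/((p:ℕ):ℝ)^2) :=
      Finset.sum_le_sum fun p _ => hglb p
    have h2 : ∑ p ∈ s, c * (1/((p:ℕ):ℝ)^2) = c * ∑ p ∈ s, (1:ℝ)/((p:ℕ):ℝ)^2 := by
      rw [Finset.mul_sum]
    have h3 : ∑ p ∈ s, (1:ℝ)/((p:ℕ):ℝ)^2 = ∑ q ∈ s.image (Subtype.val), (1:ℝ)/(q:ℝ)^2 := by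
      rw [Finset.sum_image (fun a _ b _ h => Subtype.ext h)]
    have h4 : ∑ q ∈ s.image (Subtype.val), (1:ℝ)/(q:ℝ)^2
        ≤ 5 * Real.log 4 / (y * Real.log y) := by
      apply auxS y hy
      intro q hq
      obtain ⟨⟨p, hp1, hp2, hp3⟩, _, rfl⟩ := Finset.mem_image.mp hq
      exact ⟨hp1, hp3⟩
    calc ∑ p ∈ s, (1 - g p) ≤ c * ∑ p ∈ s, (1:ℝ)/((p:ℕ):ℝ)^2 := by rw [← h2]; exact h1
      _ ≤ c * (5 * Real.log 4 / (y * Real.log y)) := by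
          rw [h3]
          exact mul_le_mul_of_nonneg_left h4 (by linarith)
  by_cases hmult : Multipliable g
  · have hP : Filter.Tendsto (fun s : Finset S => ∏ p ∈ s, g p) Filter.atTop
        (nhds (∏' p, g p)) := hmult.hasProd
    have hPabs : Filter.Tendsto (fun s : Finset S => |(∏ p ∈ s, g p) - 1|) Filter.atTop
        (nhds (|(∏' p, g p) - 1|)) := (hP.sub tendsto_const_nhds).abs
    by_cases hky : (k:ℝ) ≤ y
    · -- good case : all factors in [0,1]
      have hg0 : ∀ p : S, 0 ≤ g p := by
        rintro ⟨p, hp1, hp2, hp3⟩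
        have hgq := hgeq ⟨p, hp1, hp2, hp3⟩
        have hkp : (m:ℝ) < (p:ℝ) := by
          have : (m:ℝ) ≤ (k:ℝ) := by exact_mod_cast Nat.sub_le k 1
          calc (m:ℝ) ≤ (k:ℝ) := this
            _ ≤ y := hky
            _ < p := hp3
        have hp0 : (0:ℝ) < p := lt_of_le_of_lt (by positivity) hkp |>.trans_le le_rfl
        rw [hgq]
        have h1 : 0 ≤ 1 - (m:ℝ) * (1/(p:ℝ)) := by
          have : (m:ℝ) * (1/(p:ℝ)) ≤ 1 := by
            rw [mul_one_div, div_le_one hp0]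
            linarith
          linarith
        positivity
      have key : ∀ s : Finset S, |(∏ p ∈ s, g p) - 1| ≤ 5 * c * Real.log 4 / (y * Real.log y) := by
        intro s
        have hup : ∏ p ∈ s, g p ≤ 1 :=
          Finset.prod_le_one (fun p _ => hg0 p) (fun p _ => hgle1 p)
        have hlo : 1 - c * (5 * Real.log 4 / (y * Real.log y)) ≤ ∏ p ∈ s, g p := by
          have := auxB s g (fun p _ => hg0 p) (fun p _ => hgle1 p)
          linarith [hsum s]
        have heq : c * (5 * Real.log 4 / (y * Real.log y))
            = 5 * c * Real.log 4 / (y * Real.log y) := by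
          field_simp
        rw [heq] at hlo
        have hb : 0 ≤ 5 * c * Real.log 4 / (y * Real.log y) := by positivity
        rw [abs_le]
        constructor <;> linarith
      have hbound : |(∏' p, g p) - 1| ≤ 5 * c * Real.log 4 / (y * Real.log y) :=
        le_of_tendsto hPabs (Filter.Eventually.of_forall key)
      refine le_trans hbound ?_
      gcongr
      have h1 : 0 ≤ (c^(k+1)+1) * (k:ℝ)^2 := by positivity
      linarith
    · -- bad case : y < k, crude bound
      push_neg at hky
      have hk3 : 3 ≤ k := by
        have : (2:ℝ) < (k:ℝ) := lt_of_le_of_lt hy hky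
        have : 2 < k := by exact_mod_cast this
        omega
      have hgabs : ∀ p : S, |g p| ≤ (if (p:ℕ) ≤ k then c else 1) := by
        rintro ⟨p, hp1, hp2, hp3⟩
        have hxp := hx ⟨p, hp1, hp2, hp3⟩
        have hgq := hgeq ⟨p, hp1, hp2, hp3⟩
        set x := 1/((p:ℕ):ℝ) with hxd
        by_cases hpk : p ≤ k
        · rw [if_pos hpk, hgq, abs_mul]
          have h1 : |(1 + x)^m| ≤ 2^m := by
            rw [abs_pow, abs_of_nonneg (by linarith [hxp.1])]
            apply pow_le_pow_left₀ (by linarith [hxp.1]) (by linarith [hxp.2.1])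
          have h2 : |1 - (m:ℝ)*x| ≤ (k:ℝ) := by
            rw [abs_le]
            have hm0 : (0:ℝ) ≤ (m:ℝ)*x := mul_nonneg (Nat.cast_nonneg m) hxp.1
            have hmx : (m:ℝ)*x ≤ (m:ℝ) := by
              nlinarith [hxp.2.1, Nat.cast_nonneg (α := ℝ) m]
            have hmk' : (m:ℝ) ≤ (k:ℝ) := by exact_mod_cast Nat.sub_le k 1
            have hk1 : (1:ℝ) ≤ (k:ℝ) := by exact_mod_cast hk
            constructor <;> nlinarith
          calc |(1+x)^m| * |1 - (m:ℝ)*x| ≤ 2^m * (k:ℝ) := by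
                apply mul_le_mul h1 h2 (abs_nonneg _) (by positivity)
            _ ≤ c := by
                rw [hc]
                rw [mul_comm]
                apply mul_le_mul_of_nonneg_left _ (Nat.cast_nonneg k)
                apply pow_le_pow_right₀ (by norm_num) (Nat.sub_le k 1)
        · rw [if_neg hpk]
          push_neg at hpk
          have hg0 : 0 ≤ g ⟨p, hp1, hp2, hp3⟩ := by
            rw [hgq]
            have hp0 : (0:ℝ) < (p:ℝ) := by linarith [hxp.2.2]
            have hmp : (m:ℝ) < (p:ℝ) := by
              have : m < p := by omega
              exact_mod_cast this
            have h1 : (m:ℝ) * (1/(p:ℝ)) ≤ 1 := by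
              rw [mul_one_div, div_le_one hp0]
              linarith
            have h2 : (0:ℝ) ≤ 1 - (m:ℝ) * (1/(p:ℝ)) := by linarith
            positivity
          rw [abs_of_nonneg hg0]
          exact hgle1 _
      have key : ∀ s : Finset S, |∏ p ∈ s, g p| ≤ c^(k+1) := by
        intro s
        rw [Finset.abs_prod]
        have h1 : ∏ p ∈ s, |g p| ≤ ∏ p ∈ s, (if (p:ℕ) ≤ k then c else 1) :=
          Finset.prod_le_prod (fun p _ => abs_nonneg _) (fun p _ => hgabs p)
        have h2 : ∏ p ∈ s, (if (p:ℕ) ≤ k then c else 1)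
            = c ^ (s.filter (fun p : S => (p:ℕ) ≤ k)).card := by
          rw [Finset.prod_ite, Finset.prod_const, Finset.prod_const_one, mul_one]
        have h3 : (s.filter (fun p : S => (p:ℕ) ≤ k)).card ≤ k+1 := by
          have hmaps : ∀ p ∈ s.filter (fun p : S => (p:ℕ) ≤ k), (p:ℕ) ∈ Finset.range (k+1) := by
            intro p hp
            simp only [Finset.mem_filter] at hp
            exact Finset.mem_range.mpr (by omega)
          have hinj : Set.InjOn (fun p : S => (p:ℕ))
              ↑(s.filter (fun p : S => (p:ℕ) ≤ k)) := fun a _ b _ h => Subtype.ext h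
          have h4 := Finset.card_le_card_of_injOn (fun p : S => (p:ℕ)) hmaps hinj
          rwa [Finset.card_range] at h4
        calc ∏ p ∈ s, |g p| ≤ c ^ (s.filter (fun p : S => (p:ℕ) ≤ k)).card := h2 ▸ h1
          _ ≤ c^(k+1) := pow_le_pow_right₀ hc1 h3
      have hPabs2 : Filter.Tendsto (fun s : Finset S => |∏ p ∈ s, g p|) Filter.atTop
          (nhds (|∏' p, g p|)) := hP.abs
      have hbound : |∏' p, g p| ≤ c^(k+1) :=
        le_of_tendsto hPabs2 (Filter.Eventually.of_forall key)
      have hfin : |(∏' p, g p) - 1| ≤ c^(k+1) + 1 := by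
        calc |(∏' p, g p) - 1| ≤ |∏' p, g p| + 1 := by
              have := abs_sub_abs_le_abs_sub (∏' p, g p) 1
              have h := abs_sub (∏' p, g p) 1
              calc |(∏' p, g p) - 1| ≤ |∏' p, g p| + |(1:ℝ)| := abs_sub _ _
                _ = |∏' p, g p| + 1 := by rw [abs_one]
          _ ≤ c^(k+1) + 1 := by linarith
      refine le_trans hfin ?_
      rw [le_div_iff₀ hyl]
      have hylk : y * Real.log y ≤ (k:ℝ)^2 := by
        have h1 : Real.log y ≤ y - 1 := Real.log_le_sub_one_of_pos (by linarith)
        have h2 : y ≤ (k:ℝ) := hky.le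
        nlinarith [hly.le]
      calc (c^(k+1) + 1) * (y * Real.log y) ≤ (c^(k+1) + 1) * (k:ℝ)^2 := by
            apply mul_le_mul_of_nonneg_left hylk (by positivity)
        _ ≤ 5 * c * Real.log 4 + (c^(k+1)+1) * (k:ℝ)^2 + 1 := by
            have : 0 ≤ 5 * c * Real.log 4 := by positivity
            linarith
  · rw [tprod_eq_one_of_not_multipliable hmult]
    simp only [sub_self, abs_zero]
    positivity
end
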